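/- arXiv:2410.17872 — 5 statements merged into one kernel-verified Lean document; each statement's English description precedes it below -/
import Mathlib

section
/- Let C(I) be a decreasing monomial code, let g be the monomial in I of smallest row index, let A = {f ∈ I : f ≺_o g and [f] < τ}, and let B = I ∖ ({g} ∪ A). Then the action of the subgroup LTA(n,2)_g on the set S = { ev(g) + Σ_{h∈A} a_h·ev(h) + C(B) : (a_h)_{h∈A} ∈ {0,1}^A } of cosets of C(B) is transitive; in particular, all cosets in S have the same weight distribution. -/
open Finset

/-! Common setup: `R_n = F_2[x_0,…,x_{n−1}]/(x_i^2 − x_i)`.  A (squarefree) monomial is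
identified with its index set `ind(g) ⊆ {0,…,n−1}`.  Reduced elements of `R_n` are
identified, via the (bijective) evaluation map `ev`, with Boolean functions
`F_2^n → F_2`, i.e. with vectors in `F_2^N` indexed by the points of `F_2^n`. -/

/-- Monomials of `M_n`, identified with their index sets. -/
abbrev Mon (n : ℕ) := Finset (Fin n)

/-- Points of `F_2^n`. -/
abbrev Pt (n : ℕ) := Fin n → ZMod 2

/-- Elements of `R_n` (equivalently, vectors of `F_2^N`), identified with Boolean
functions via the evaluation map `ev`. -/
abbrev BF (n : ℕ) := Pt n → ZMod 2

variable {n : ℕ}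

/-- `ev` of the monomial `∏_{i ∈ S} x_i`. -/
def evm (S : Mon n) : BF n := fun x => ∏ i ∈ S, x i

/-- The coefficient `⟨f⟩_S` of the monomial `S` in the reduced polynomial represented by
the Boolean function `f` (binary Möbius inversion: `⟨f⟩_S = ∑_{supp x ⊆ S} f(x)`). -/
def mcoeff (f : BF n) (S : Mon n) : ZMod 2 :=
  ∑ x ∈ Finset.univ.filter (fun x : Pt n => ∀ i ∉ S, x i = 0), f x

/-- The row index `[g] = ∑_{i ∉ ind(g)} 2^i` of a monomial. -/
def rowIdx (S : Mon n) : ℕ := ∑ i ∈ Sᶜ, 2 ^ (i : ℕ)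

/-- `Ovd h g` means `h ≺_o g`: `h` is a one-variable descendant of `g`, i.e. `g = h·x_i`
for some `i ∉ ind(h)`, or `g = q·x_i`, `h = q·x_j` for a monomial `q` and `j < i`. -/
def Ovd (h g : Mon n) : Prop :=
  (∃ i ∉ h, g = insert i h) ∨
  (∃ (q : Mon n) (i j : Fin n), i ∉ q ∧ j ∉ q ∧ j < i ∧ g = insert i q ∧ h = insert j q)

/-- The standard partial order `≼` on monomials: `g ≼ h` iff some divisor `h'` of `h` with
`deg h' = deg g` dominates `g` coordinatewise after sorting the index lists increasingly. -/
def MonLE (g h : Mon n) : Prop :=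
  ∃ h' ⊆ h, h'.card = g.card ∧
    List.Forall₂ (· ≤ ·) (Finset.sort g (· ≤ ·)) (Finset.sort h' (· ≤ ·))

/-- `C(I)` is a decreasing monomial code. -/
def DecMonCode (I : Set (Mon n)) : Prop := ∀ h ∈ I, ∀ g, MonLE g h → g ∈ I

/-- The monomial code `C(I)`: the `F_2`-span of `{ev(g) : g ∈ I}`. -/
def code (I : Set (Mon n)) : Set (BF n) := ↑(Submodule.span (ZMod 2) (evm '' I))

/-- An element `(A,b)` of `LTA(n,2)`: `A` lower triangular with unit diagonal. -/
structure LTA (n : ℕ) where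
  A : Matrix (Fin n) (Fin n) (ZMod 2)
  b : Pt n
  diag : ∀ i, A i i = 1
  lower : ∀ i j : Fin n, i < j → A i j = 0

/-- The affine map `x ↦ Ax + b` on points. -/
def LTA.actPt (L : LTA n) (x : Pt n) : Pt n := L.A.mulVec x + L.b

/-- The action of `(A,b)` on `R_n` (equivalently on `F_2^N`):
`((A,b)·f)(x) = f(Ax+b)`, so that `(A,b)·ev(f) = ev((A,b)·f)`. -/
def LTA.act (L : LTA n) (f : BF n) : BF n := fun x => f (L.actPt x)

/-- Hamming weight. -/
def wt (f : BF n) : ℕ := (Finset.univ.filter (fun x => f x ≠ 0)).card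

/-- Weight distribution of a set of vectors: `d ↦ |{x ∈ S : wt x = d}|`. -/
noncomputable def wdist (S : Set (BF n)) : ℕ → ℕ := fun d => Nat.card {x : BF n // x ∈ S ∧ wt x = d}

/-- Membership in the subgroup `LTA(n,2)_g`: `a_{i,j} = 0` whenever `i ∉ ind(g)` or
`j ∈ ind(g)` (for off-diagonal entries), and `b_i = 0` whenever `i ∉ ind(g)`. -/
def InSubG (g : Mon n) (L : LTA n) : Prop :=
  (∀ i j : Fin n, i ≠ j → (i ∉ g ∨ j ∈ g) → L.A i j = 0) ∧
  (∀ i : Fin n, i ∉ g → L.b i = 0)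
section AuxBasic

variable {n : ℕ}

lemma z2_add_self : ∀ a : ZMod 2, a + a = 0 := by decide

lemma z2_cases : ∀ a : ZMod 2, a = 0 ∨ a = 1 := by decide

lemma bf_add_self {α : Type*} (f : α → ZMod 2) : f + f = 0 :=
  funext fun x => z2_add_self (f x)

lemma eq_add_of_char2 (u v : BF n) : u = v + (u + v) :=
  funext fun x => (by decide : ∀ a b : ZMod 2, a = b + (a + b)) (u x) (v x)

lemma bf_two_nsmul (v : BF n) : (2 : ℕ) • v = 0 := by
  rw [two_smul]; exact bf_add_self v

lemma bf_two_zsmul (v : BF n) : (2 : ℤ) • v = 0 := by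
  rw [two_smul]; exact bf_add_self v

lemma bf_two_mul (v : BF n) : (2 : BF n) * v = 0 :=
  funext fun x => (by decide : ∀ a : ZMod 2, 2 * a = 0) (v x)

lemma evm_insert_eq (j : Fin n) (s : Mon n) (x : Pt n) :
    evm (insert j s) x = x j * evm s x := by
  by_cases hj : j ∈ s
  · rw [Finset.insert_eq_self.2 hj]
    have h1 : evm s x = x j * evm (s.erase j) x := (Finset.mul_prod_erase s _ hj).symm
    rw [h1, ← mul_assoc, (by decide : ∀ a : ZMod 2, a * a = a) (x j)]
  · exact Finset.prod_insert hj

end AuxBasic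
section Elem

variable {n : ℕ}

/-- Elementary transvection: adds `x j` to row `i`. -/
def elemA (i j : Fin n) (hji : j < i) : LTA n where
  A := fun k l => if k = l then 1 else if k = i ∧ l = j then 1 else 0
  b := 0
  diag := fun k => by simp
  lower := fun k l hkl => by
    have h1 : k ≠ l := ne_of_lt hkl
    show (if k = l then (1:ZMod 2) else if k = i ∧ l = j then 1 else 0) = 0
    rw [if_neg h1, if_neg]
    rintro ⟨rfl, rfl⟩
    exact absurd hkl (not_lt.2 hji.le)

/-- Elementary translation in direction `i`. -/
def elemB (i : Fin n) : LTA n where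
  A := 1
  b := fun k => if k = i then 1 else 0
  diag := fun k => Matrix.one_apply_eq k
  lower := fun k l h => Matrix.one_apply_ne (ne_of_lt h)

lemma elemA_mem {g : Mon n} {i j : Fin n} (hji : j < i) (hig : i ∈ g) (hjg : j ∉ g) :
    InSubG g (elemA i j hji) := by
  constructor
  · intro k l hkl hor
    show (if k = l then _ else _) = 0
    rw [if_neg hkl, if_neg]
    rintro ⟨rfl, rfl⟩
    rcases hor with h | h
    · exact h hig
    · exact hjg h
  · intro k _; rfl

lemma elemB_mem {g : Mon n} {i : Fin n} (hig : i ∈ g) : InSubG g (elemB i) := by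
  refine ⟨fun k l hkl _ => Matrix.one_apply_ne hkl, fun k hk => ?_⟩
  show (if k = i then _ else _) = 0
  rw [if_neg]; rintro rfl; exact hk hig

lemma elemA_actPt {i j : Fin n} (hji : j < i) (x : Pt n) :
    (elemA i j hji).actPt x = fun k => if k = i then x i + x j else x k := by
  funext k
  have hij : i ≠ j := ne_of_gt hji
  show (∑ l, (if k = l then 1 else if k = i ∧ l = j then (1 : ZMod 2) else 0) * x l) + 0 = _
  rw [add_zero]
  by_cases hk : k = i
  · rw [if_pos hk]
    have : ∀ l, (if k = l then 1 else if k = i ∧ l = j then (1 : ZMod 2) else 0) * x l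
        = (if l = i then x l else 0) + (if l = j then x l else 0) := by
      intro l
      by_cases h1 : l = i
      · rw [if_pos (hk.trans h1.symm), if_pos h1, if_neg (fun h2 => hij (h1 ▸ h2)), one_mul,
          add_zero]
      · rw [if_neg (fun h => h1 (h.symm.trans hk)), if_neg h1]
        by_cases h2 : l = j
        · rw [if_pos ⟨hk, h2⟩, if_pos h2, one_mul, zero_add]
        · rw [if_neg (fun h => h2 h.2), if_neg h2, zero_mul, add_zero]
    rw [Finset.sum_congr rfl (fun l _ => this l), Finset.sum_add_distrib,
      Finset.sum_ite_eq' Finset.univ i x, Finset.sum_ite_eq' Finset.univ j x,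
      if_pos (Finset.mem_univ _), if_pos (Finset.mem_univ _)]
  · rw [if_neg hk]
    rw [Finset.sum_eq_single k]
    · rw [if_pos rfl, one_mul]
    · intro l _ hlk
      rw [if_neg (fun h => hlk h.symm), if_neg (fun h => hk h.1), zero_mul]
    · intro h; exact absurd (Finset.mem_univ k) h

lemma elemB_actPt (i : Fin n) (x : Pt n) :
    (elemB i).actPt x = fun k => if k = i then x i + 1 else x k := by
  funext k
  show ((1 : Matrix (Fin n) (Fin n) (ZMod 2)).mulVec x) k + (if k = i then 1 else 0) = _
  rw [Matrix.one_mulVec]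
  by_cases hk : k = i
  · subst hk; rw [if_pos rfl, if_pos rfl]
  · rw [if_neg hk, if_neg hk, add_zero]

lemma elemA_act_evm {i j : Fin n} (hji : j < i) (h : Mon n) :
    (elemA i j hji).act (evm h) =
      if i ∈ h then evm h + evm (insert j (h.erase i)) else evm h := by
  funext x
  show evm h ((elemA i j hji).actPt x) = _
  rw [elemA_actPt]
  by_cases hi : i ∈ h
  · rw [if_pos hi]
    show (∏ k ∈ h, if k = i then x i + x j else x k) = _
    rw [← Finset.mul_prod_erase h _ hi, if_pos rfl]
    have h2 : (∏ k ∈ h.erase i, if k = i then x i + x j else x k) = evm (h.erase i) x :=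
      Finset.prod_congr rfl fun k hk => if_neg (Finset.ne_of_mem_erase hk)
    rw [h2, add_mul, Pi.add_apply, ← evm_insert_eq, ← evm_insert_eq, Finset.insert_erase hi]
  · rw [if_neg hi]
    exact Finset.prod_congr rfl fun k hk => if_neg (fun he => hi (by rw [← he]; exact hk))

lemma elemB_act_evm (i : Fin n) (h : Mon n) :
    (elemB i).act (evm h) = if i ∈ h then evm h + evm (h.erase i) else evm h := by
  funext x
  show evm h ((elemB i).actPt x) = _
  rw [elemB_actPt]
  by_cases hi : i ∈ h
  · rw [if_pos hi]
    show (∏ k ∈ h, if k = i then x i + 1 else x k) = _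
    rw [← Finset.mul_prod_erase h _ hi, if_pos rfl]
    have h2 : (∏ k ∈ h.erase i, if k = i then x i + 1 else x k) = evm (h.erase i) x :=
      Finset.prod_congr rfl fun k hk => if_neg (Finset.ne_of_mem_erase hk)
    rw [h2, add_mul, one_mul, Pi.add_apply, ← evm_insert_eq, Finset.insert_erase hi]
  · rw [if_neg hi]
    exact Finset.prod_congr rfl fun k hk => if_neg (fun he => hi (by rw [← he]; exact hk))

end Elem
section Combinat

variable {n : ℕ}

lemma sdiff_insert_erase {g h : Mon n} {i j : Fin n} (hig : i ∈ g) (hih : i ∈ h)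
    (hjg : j ∉ g) : g \ (insert j (h.erase i)) = insert i (g \ h) := by
  ext k
  simp only [Finset.mem_sdiff, Finset.mem_insert, Finset.mem_erase]
  constructor
  · rintro ⟨hkg, hk⟩
    by_cases hki : k = i
    · exact Or.inl hki
    · exact Or.inr ⟨hkg, fun hkh => hk (Or.inr ⟨hki, hkh⟩)⟩
  · rintro (rfl | ⟨hkg, hkh⟩)
    · refine ⟨hig, ?_⟩
      rintro (rfl | ⟨hne, _⟩)
      · exact hjg hig
      · exact hne rfl
    · refine ⟨hkg, ?_⟩
      rintro (rfl | ⟨_, hkh'⟩)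
      · exact hjg hkg
      · exact hkh hkh'

lemma sdiff_erase_eq {g h : Mon n} {i : Fin n} (hig : i ∈ g) (hih : i ∈ h) :
    g \ (h.erase i) = insert i (g \ h) := by
  ext k
  simp only [Finset.mem_sdiff, Finset.mem_insert, Finset.mem_erase]
  constructor
  · rintro ⟨hkg, hk⟩
    by_cases hki : k = i
    · exact Or.inl hki
    · exact Or.inr ⟨hkg, fun hkh => hk ⟨hki, hkh⟩⟩
  · rintro (rfl | ⟨hkg, hkh⟩)
    · exact ⟨hig, fun hc => hc.1 rfl⟩
    · exact ⟨hkg, fun hc => hkh hc.2⟩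

lemma Ovd.card_sdiff {f g : Mon n} (h : Ovd f g) : (g \ f).card = 1 := by
  rcases h with ⟨i, hif, rfl⟩ | ⟨q, i, j, hiq, hjq, hji, rfl, rfl⟩
  · have : insert i f \ f = {i} := by
      ext k
      simp only [Finset.mem_sdiff, Finset.mem_insert, Finset.mem_singleton]
      constructor
      · rintro ⟨rfl | hkf, hk⟩
        · rfl
        · exact absurd hkf hk
      · rintro rfl; exact ⟨Or.inl rfl, hif⟩
    rw [this, Finset.card_singleton]
  · have hij : i ≠ j := (ne_of_lt hji).symm
    have : insert i q \ insert j q = {i} := by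
      ext k
      simp only [Finset.mem_sdiff, Finset.mem_insert, Finset.mem_singleton]
      constructor
      · rintro ⟨rfl | hkq, hk⟩
        · rfl
        · exact absurd (Or.inr hkq) hk
      · rintro rfl
        refine ⟨Or.inl rfl, ?_⟩
        rintro (rfl | hiq')
        · exact hij rfl
        · exact hiq hiq'
    rw [this, Finset.card_singleton]

lemma Ovd.ne {f g : Mon n} (h : Ovd f g) : f ≠ g := by
  rintro rfl
  have := h.card_sdiff
  rw [Finset.sdiff_self] at this
  simp at this

lemma rowIdx_lt_of_ssubset {g h : Mon n} (hss : g ⊂ h) : rowIdx h < rowIdx g := by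
  obtain ⟨a, hah, hag⟩ := Finset.exists_of_ssubset hss
  exact Finset.sum_lt_sum_of_subset (Finset.compl_subset_compl.2 hss.subset)
    (Finset.mem_compl.2 hag) (by simp [hah]) (pow_pos (by norm_num) _)
    (fun j _ _ => Nat.zero_le _)

lemma erase_comm' (s : Finset (Fin n)) (a b : Fin n) :
    (s.erase a).erase b = (s.erase b).erase a := by
  ext k
  simp only [Finset.mem_erase]
  tauto

lemma sort_min'_cons (s : Finset (Fin n)) (hs : s.Nonempty) :
    s.sort (· ≤ ·) = s.min' hs :: (s.erase (s.min' hs)).sort (· ≤ ·) := by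
  conv_lhs => rw [← Finset.insert_erase (s.min'_mem hs)]
  exact Finset.sort_insert _ (fun b hb => s.min'_le b (Finset.mem_of_mem_erase hb))
    (Finset.notMem_erase _ _)

lemma forall₂_sort_replace :
    ∀ (N : ℕ) (s : Finset (Fin n)) (i j : Fin n), s.card ≤ N → i ∈ s → j ∉ s → j ≤ i →
    List.Forall₂ (· ≤ ·) ((insert j (s.erase i)).sort (· ≤ ·)) (s.sort (· ≤ ·)) := by
  intro N
  induction N with
  | zero =>
    intro s i j hc hi _ _
    exact absurd (Finset.card_pos.2 ⟨i, hi⟩) (by omega)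
  | succ N ih =>
    intro s i j hc hi hj hji
    have hs : s.Nonempty := ⟨i, hi⟩
    set m := s.min' hs with hm
    have hmem : m ∈ s := s.min'_mem hs
    have hjt : j ∉ s.erase i := fun hmem' => hj (Finset.mem_of_mem_erase hmem')
    by_cases him : i = m
    · rw [Finset.sort_insert _ (fun b hb => le_trans hji (him ▸ s.min'_le b
        (Finset.mem_of_mem_erase hb))) hjt]
      rw [sort_min'_cons s hs, ← hm, ← him]
      exact List.Forall₂.cons hji (List.forall₂_same.2 fun x _ => le_refl x)
    · have him' : i ∈ s.erase m := Finset.mem_erase.2 ⟨him, hi⟩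
      have hcard : (s.erase m).card ≤ N := by
        rw [Finset.card_erase_of_mem hmem]
        have := Finset.card_pos.2 hs
        omega
      have hjm : j ≠ m := fun he => hj (he ▸ hmem)
      rcases lt_or_gt_of_ne hjm with hlt | hgt
      · -- j < m : min of t is j
        rw [Finset.sort_insert _ (fun b hb => le_of_lt (lt_of_lt_of_le hlt
          (s.min'_le b (Finset.mem_of_mem_erase hb)))) hjt]
        rw [sort_min'_cons s hs, ← hm]
        refine List.Forall₂.cons (le_of_lt hlt) ?_
        have hrec := ih (s.erase m) i m hcard him' (Finset.notMem_erase m s) (s.min'_le i hi)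
        rwa [erase_comm', Finset.insert_erase
          (Finset.mem_erase.2 ⟨fun he => him he.symm, hmem⟩)] at hrec
      · -- m < j : min of t is m
        have htm : (insert j (s.erase i)).erase m = insert j ((s.erase m).erase i) := by
          rw [Finset.erase_insert_of_ne hjm, erase_comm']
        have hmint : m ∈ insert j (s.erase i) :=
          Finset.mem_insert_of_mem (Finset.mem_erase.2 ⟨fun he => him he.symm, hmem⟩)
        conv_lhs => rw [← Finset.insert_erase hmint]
        rw [Finset.sort_insert _ ?hle (Finset.notMem_erase _ _), sort_min'_cons s hs, ← hm, htm]
        case hle =>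
          intro b hb
          rcases Finset.mem_insert.1 (Finset.mem_of_mem_erase hb) with rfl | hb'
          · exact le_of_lt hgt
          · exact s.min'_le b (Finset.mem_of_mem_erase hb')
        exact List.Forall₂.cons (le_refl m)
          (ih (s.erase m) i j hcard him' (fun hc => hj (Finset.mem_of_mem_erase hc)) hji)

lemma monLE_subset {t s : Mon n} (h : t ⊆ s) : MonLE t s :=
  ⟨t, h, rfl, List.forall₂_same.2 fun x _ => le_refl x⟩

lemma monLE_replace {s : Mon n} {i j : Fin n} (hi : i ∈ s) (hj : j ∉ s) (hji : j ≤ i) :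
    MonLE (insert j (s.erase i)) s := by
  refine ⟨s, Finset.Subset.refl s, ?_, ?_⟩
  · rw [Finset.card_insert_of_notMem (fun hc => hj (Finset.mem_of_mem_erase hc)),
      Finset.card_erase_of_mem hi]
    have := Finset.card_pos.2 ⟨i, hi⟩
    omega
  · exact forall₂_sort_replace s.card s i j le_rfl hi hj hji

end Combinat
section LinAlg

variable {n : ℕ} {g : Mon n}

lemma act_add (L : LTA n) (u v : BF n) : L.act (u + v) = L.act u + L.act v := rfl

lemma act_smul (L : LTA n) (c : ZMod 2) (u : BF n) : L.act (c • u) = c • L.act u := rfl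

/-- The action as a linear map. -/
def actLin (L : LTA n) : BF n →ₗ[ZMod 2] BF n where
  toFun := L.act
  map_add' := fun _ _ => rfl
  map_smul' := fun _ _ => rfl

lemma mulA_apply {L M : LTA n} (hL : InSubG g L) (hM : InSubG g M) (k l : Fin n) :
    (M.A * L.A) k l = if k = l then 1 else M.A k l + L.A k l := by
  rw [Matrix.mul_apply]
  by_cases hkl : k = l
  · subst hkl
    rw [if_pos rfl, Finset.sum_eq_single k]
    · rw [M.diag, L.diag, one_mul]
    · intro m _ hmk
      by_cases hmg : m ∈ g
      · rw [hM.1 k m (Ne.symm hmk) (Or.inr hmg), zero_mul]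
      · rw [hL.1 m k hmk (Or.inl hmg), mul_zero]
    · intro hk; exact absurd (Finset.mem_univ k) hk
  · rw [if_neg hkl]
    have hvan : ∀ m ∈ Finset.univ, m ∉ ({k, l} : Finset (Fin n)) → M.A k m * L.A m l = 0 := by
      intro m _ hm
      simp only [Finset.mem_insert, Finset.mem_singleton, not_or] at hm
      by_cases hmg : m ∈ g
      · rw [hM.1 k m (fun he => hm.1 he.symm) (Or.inr hmg), zero_mul]
      · rw [hL.1 m l hm.2 (Or.inl hmg), mul_zero]
    rw [← Finset.sum_subset (Finset.subset_univ ({k, l} : Finset (Fin n))) hvan,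
      Finset.sum_pair hkl, M.diag, L.diag, one_mul, mul_one, add_comm]

lemma mulvec_b {M : LTA n} (hM : InSubG g M) {b : Pt n} (hb : ∀ k ∉ g, b k = 0) :
    M.A.mulVec b = b := by
  funext k
  show ∑ m, M.A k m * b m = b k
  rw [Finset.sum_eq_single k]
  · rw [M.diag, one_mul]
  · intro m _ hmk
    by_cases hmg : m ∈ g
    · rw [hM.1 k m (Ne.symm hmk) (Or.inr hmg), zero_mul]
    · rw [hb m hmg, mul_zero]
  · intro hk; exact absurd (Finset.mem_univ k) hk

lemma comp_exists {L M : LTA n} (hL : InSubG g L) (hM : InSubG g M) :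
    ∃ P : LTA n, InSubG g P ∧ ∀ f : BF n, P.act f = L.act (M.act f) := by
  have hdiag : ∀ k, (M.A * L.A) k k = 1 := fun k => by rw [mulA_apply hL hM, if_pos rfl]
  have hlow : ∀ k l : Fin n, k < l → (M.A * L.A) k l = 0 := by
    intro k l hkl
    rw [mulA_apply hL hM, if_neg (ne_of_lt hkl), M.lower k l hkl, L.lower k l hkl, add_zero]
  refine ⟨⟨M.A * L.A, L.b + M.b, hdiag, hlow⟩, ⟨?_, ?_⟩, ?_⟩
  · intro k l hkl hor
    show (M.A * L.A) k l = 0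
    rw [mulA_apply hL hM, if_neg hkl, hM.1 k l hkl hor, hL.1 k l hkl hor, add_zero]
  · intro k hk
    show L.b k + M.b k = 0
    rw [hL.2 k hk, hM.2 k hk, add_zero]
  · intro f
    funext x
    show f _ = f (M.actPt (L.actPt x))
    congr 1
    show (M.A * L.A).mulVec x + (L.b + M.b) = M.A.mulVec (L.A.mulVec x + L.b) + M.b
    rw [Matrix.mulVec_add, mulvec_b hM hL.2, ← Matrix.mulVec_mulVec, add_assoc]

/-- The identity element. -/
def idLTA : LTA n :=
  ⟨1, 0, fun i => Matrix.one_apply_eq i, fun _ _ h => Matrix.one_apply_ne (ne_of_lt h)⟩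

lemma idLTA_mem : InSubG g (idLTA : LTA n) :=
  ⟨fun _ _ hij _ => Matrix.one_apply_ne hij, fun _ _ => rfl⟩

lemma idLTA_act (f : BF n) : (idLTA : LTA n).act f = f := by
  funext x
  show f ((1 : Matrix (Fin n) (Fin n) (ZMod 2)).mulVec x + 0) = f x
  rw [Matrix.one_mulVec, add_zero]

lemma actPt_invol {L : LTA n} (hL : InSubG g L) (x : Pt n) : L.actPt (L.actPt x) = x := by
  have hAA : L.A * L.A = 1 := by
    ext k l
    rw [mulA_apply hL hL]
    by_cases hkl : k = l
    · rw [if_pos hkl, hkl, Matrix.one_apply_eq]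
    · rw [if_neg hkl, z2_add_self, Matrix.one_apply_ne hkl]
  show L.A.mulVec (L.A.mulVec x + L.b) + L.b = x
  rw [Matrix.mulVec_add, mulvec_b hL hL.2, Matrix.mulVec_mulVec, hAA, Matrix.one_mulVec,
    add_assoc, bf_add_self, add_zero]

lemma act_invol {L : LTA n} (hL : InSubG g L) (f : BF n) : L.act (L.act f) = f := by
  funext x
  show f (L.actPt (L.actPt x)) = f x
  rw [actPt_invol hL]

lemma act_span_le {L : LTA n} {Bset : Set (Mon n)}
    (hgen : ∀ h ∈ Bset, L.act (evm h) ∈ Submodule.span (ZMod 2) (evm '' Bset)) :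
    ∀ c ∈ Submodule.span (ZMod 2) (evm '' Bset),
      L.act c ∈ Submodule.span (ZMod 2) (evm '' Bset) := by
  intro c hc
  have hle : Submodule.span (ZMod 2) (evm '' Bset) ≤
      (Submodule.span (ZMod 2) (evm '' Bset)).comap (actLin L) := by
    rw [Submodule.span_le]
    rintro _ ⟨h, hh, rfl⟩
    exact hgen h hh
  exact hle hc

end LinAlg
section Master

variable {n : ℕ} {I : Set (Mon n)} {g : Mon n} {Aset Bset : Set (Mon n)}

lemma mem_B_of_step (hdec : DecMonCode I) (hgmin : ∀ f ∈ I, rowIdx g ≤ rowIdx f)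
    (hAo : ∀ f ∈ Aset, Ovd f g) (hBs : Bset = I \ ({g} ∪ Aset))
    {h h' : Mon n} (hhI : h ∈ I) (hhg : h ≠ g)
    (hle : MonLE h' h) (hcard : (g \ h').card = (g \ h).card + 1) : h' ∈ Bset := by
  subst hBs
  refine ⟨hdec h hhI h' hle, ?_⟩
  intro hmem
  rcases hmem with hmem | hmem
  · rw [Set.mem_singleton_iff] at hmem
    subst hmem
    rw [Finset.sdiff_self, Finset.card_empty] at hcard
    omega
  · have h1 := (hAo h' hmem).card_sdiff
    rw [h1] at hcard
    have hsub : g ⊆ h := by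
      rw [← Finset.sdiff_eq_empty_iff_subset]
      exact Finset.card_eq_zero.1 (by omega)
    have hss : g ⊂ h := Finset.ssubset_iff_subset_ne.mpr ⟨hsub, Ne.symm hhg⟩
    exact absurd (hgmin h hhI) (not_le.2 (rowIdx_lt_of_ssubset hss))

lemma elemA_step (hdec : DecMonCode I) (hgmin : ∀ f ∈ I, rowIdx g ≤ rowIdx f)
    (hAo : ∀ f ∈ Aset, Ovd f g) (hBs : Bset = I \ ({g} ∪ Aset))
    {i j : Fin n} (hji : j < i) (hig : i ∈ g) (hjg : j ∉ g) :
    ∀ h ∈ I, h ≠ g →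
      (elemA i j hji).act (evm h) + evm h ∈ Submodule.span (ZMod 2) (evm '' Bset) := by
  intro h hhI hhg
  rw [elemA_act_evm]
  by_cases hi : i ∈ h
  · rw [if_pos hi]
    have heq : evm h + evm (insert j (h.erase i)) + evm h = evm (insert j (h.erase i)) := by
      rw [add_comm (evm h) (evm (insert j (h.erase i))), add_assoc, bf_add_self, add_zero]
    rw [heq]
    apply Submodule.subset_span
    refine ⟨insert j (h.erase i), ?_, rfl⟩
    have hcard : (g \ insert j (h.erase i)).card = (g \ h).card + 1 := by
      rw [sdiff_insert_erase hig hi hjg,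
        Finset.card_insert_of_notMem (fun hc => (Finset.mem_sdiff.1 hc).2 hi)]
    have hle : MonLE (insert j (h.erase i)) h := by
      by_cases hjh : j ∈ h
      · rw [Finset.insert_eq_self.2 (Finset.mem_erase.2 ⟨ne_of_lt hji, hjh⟩)]
        exact monLE_subset (Finset.erase_subset i h)
      · exact monLE_replace hi hjh hji.le
    exact mem_B_of_step hdec hgmin hAo hBs hhI hhg hle hcard
  · rw [if_neg hi, bf_add_self]
    exact Submodule.zero_mem _

lemma elemB_step (hdec : DecMonCode I) (hgmin : ∀ f ∈ I, rowIdx g ≤ rowIdx f)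
    (hAo : ∀ f ∈ Aset, Ovd f g) (hBs : Bset = I \ ({g} ∪ Aset))
    {i : Fin n} (hig : i ∈ g) :
    ∀ h ∈ I, h ≠ g →
      (elemB i).act (evm h) + evm h ∈ Submodule.span (ZMod 2) (evm '' Bset) := by
  intro h hhI hhg
  rw [elemB_act_evm]
  by_cases hi : i ∈ h
  · rw [if_pos hi]
    have heq : evm h + evm (h.erase i) + evm h = evm (h.erase i) := by
      rw [add_comm (evm h) (evm (h.erase i)), add_assoc, bf_add_self, add_zero]
    rw [heq]
    apply Submodule.subset_span
    refine ⟨h.erase i, ?_, rfl⟩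
    have hcard : (g \ h.erase i).card = (g \ h).card + 1 := by
      rw [sdiff_erase_eq hig hi,
        Finset.card_insert_of_notMem (fun hc => (Finset.mem_sdiff.1 hc).2 hi)]
    exact mem_B_of_step hdec hgmin hAo hBs hhI hhg
      (monLE_subset (Finset.erase_subset i h)) hcard
  · rw [if_neg hi, bf_add_self]
    exact Submodule.zero_mem _

lemma master (hdec : DecMonCode I) (hgmin : ∀ f ∈ I, rowIdx g ≤ rowIdx f)
    (hAsub : ∀ f ∈ Aset, f ∈ I ∧ Ovd f g) (hBs : Bset = I \ ({g} ∪ Aset))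
    (D : Finset (Mon n)) (hD : ↑D ⊆ Aset) :
    ∃ L : LTA n, InSubG g L ∧
      (∀ h ∈ I, h ≠ g → L.act (evm h) + evm h ∈ Submodule.span (ZMod 2) (evm '' Bset)) ∧
      L.act (evm g) + (evm g + ∑ h ∈ D, evm h) ∈ Submodule.span (ZMod 2) (evm '' Bset) := by
  classical
  revert hD
  induction D using Finset.induction_on with
  | empty =>
    intro _
    refine ⟨idLTA, idLTA_mem, ?_, ?_⟩
    · intro h _ _
      rw [idLTA_act, bf_add_self]
      exact Submodule.zero_mem _
    · rw [idLTA_act, Finset.sum_empty, add_zero, bf_add_self]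
      exact Submodule.zero_mem _
  | @insert d D' hdD' ih =>
    intro hD
    have hdA : d ∈ Aset := hD (Finset.mem_coe.2 (Finset.mem_insert_self d D'))
    obtain ⟨L', hL', hstep', hgeq'⟩ := ih
      (fun x hx => hD (Finset.mem_coe.2 (Finset.mem_insert_of_mem (Finset.mem_coe.1 hx))))
    obtain ⟨hdI, hdOvd⟩ := hAsub d hdA
    obtain ⟨E, hE, hEg, hEstep⟩ :
        ∃ E : LTA n, InSubG g E ∧ E.act (evm g) = evm g + evm d ∧
          (∀ h ∈ I, h ≠ g →
            E.act (evm h) + evm h ∈ Submodule.span (ZMod 2) (evm '' Bset)) := by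
      rcases hdOvd with ⟨i, hid, hgd⟩ | ⟨q, i, j, hiq, hjq, hji, hgq, hdq⟩
      · have hig : i ∈ g := by rw [hgd]; exact Finset.mem_insert_self i d
        refine ⟨elemB i, elemB_mem hig, ?_,
          elemB_step hdec hgmin (fun f hf => (hAsub f hf).2) hBs hig⟩
        rw [elemB_act_evm, if_pos hig]
        congr 1
        rw [hgd, Finset.erase_insert hid]
      · have hig : i ∈ g := by rw [hgq]; exact Finset.mem_insert_self i q
        have hjg : j ∉ g := by
          rw [hgq]
          intro hc
          rcases Finset.mem_insert.1 hc with rfl | hc'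
          · exact absurd hji (lt_irrefl _)
          · exact hjq hc'
        refine ⟨elemA i j hji, elemA_mem hji hig hjg, ?_,
          elemA_step hdec hgmin (fun f hf => (hAsub f hf).2) hBs hji hig hjg⟩
        rw [elemA_act_evm, if_pos hig]
        congr 1
        rw [hgq, Finset.erase_insert hiq, ← hdq]
    have hEK : ∀ c ∈ Submodule.span (ZMod 2) (evm '' Bset),
        E.act c ∈ Submodule.span (ZMod 2) (evm '' Bset) := by
      apply act_span_le
      intro h hh
      have hhIg : h ∈ I ∧ h ≠ g := by
        rw [hBs] at hh
        exact ⟨hh.1, fun he => hh.2 (Or.inl he)⟩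
      rw [eq_add_of_char2 (E.act (evm h)) (evm h)]
      exact Submodule.add_mem _ (Submodule.subset_span ⟨h, hh, rfl⟩)
        (hEstep h hhIg.1 hhIg.2)
    obtain ⟨P, hP, hPact⟩ := comp_exists hE hL'
    refine ⟨P, hP, ?_, ?_⟩
    · intro h hhI hhg
      rw [hPact]
      have hc : L'.act (evm h) + evm h ∈ Submodule.span (ZMod 2) (evm '' Bset) :=
        hstep' h hhI hhg
      rw [show L'.act (evm h) = evm h + (L'.act (evm h) + evm h) from eq_add_of_char2 _ _,
        act_add]
      have h2 := hEstep h hhI hhg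
      have h3 := hEK _ hc
      have hY := Submodule.add_mem _ h2 h3
      convert hY using 1
      abel
    · rw [hPact, Finset.sum_insert hdD']
      have hc0 : L'.act (evm g) + (evm g + ∑ h ∈ D', evm h) ∈
          Submodule.span (ZMod 2) (evm '' Bset) := hgeq'
      have hu2 : E.act (L'.act (evm g)) = E.act (evm g) + E.act (∑ h ∈ D', evm h) +
          E.act (L'.act (evm g) + (evm g + ∑ h ∈ D', evm h)) := by
        conv_lhs => rw [show L'.act (evm g) = (evm g + ∑ h ∈ D', evm h) +
          (L'.act (evm g) + (evm g + ∑ h ∈ D', evm h)) from eq_add_of_char2 _ _]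
        rw [act_add, act_add]
      have hsum : E.act (∑ h ∈ D', evm h) = ∑ h ∈ D', E.act (evm h) :=
        map_sum (actLin E) _ _
      rw [hu2, hEg, hsum]
      have hsum2 : (∑ h ∈ D', E.act (evm h)) + (∑ h ∈ D', evm h) ∈
          Submodule.span (ZMod 2) (evm '' Bset) := by
        rw [← Finset.sum_add_distrib]
        refine Submodule.sum_mem _ fun h hh => ?_
        have hhA : h ∈ Aset := hD (Finset.mem_coe.2 (Finset.mem_insert_of_mem hh))
        obtain ⟨hhI', hhOvd⟩ := hAsub h hhA
        exact hEstep h hhI' hhOvd.ne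
      have h3 := hEK _ hc0
      have hY := Submodule.add_mem _ hsum2 h3
      convert hY using 1
      abel_nf
      simp [bf_two_nsmul, bf_two_zsmul, bf_two_mul]

end Master
section Final

variable {n : ℕ} {g : Mon n}

lemma hcoef (c1 c2 : ZMod 2) (v : BF n) :
    (if c1 + c2 = 1 then v else 0) + c1 • v = c2 • v := by
  rcases z2_cases c1 with rfl | rfl <;> rcases z2_cases c2 with rfl | rfl <;>
    simp [bf_add_self v, (by decide : (1 + 1 : ZMod 2) ≠ 1), (by decide : (0 + 1 : ZMod 2) = 1),
      (by decide : (1 + 0 : ZMod 2) = 1), (by decide : (0 + 0 : ZMod 2) ≠ 1)]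

lemma wt_act {L : LTA n} (hL : InSubG g L) (f : BF n) : wt (L.act f) = wt f := by
  unfold wt
  refine Finset.card_bij' (fun x _ => L.actPt x) (fun x _ => L.actPt x) ?_ ?_ ?_ ?_
  · intro x hx
    refine Finset.mem_filter.2 ⟨Finset.mem_univ _, ?_⟩
    exact (Finset.mem_filter.1 hx).2
  · intro x hx
    refine Finset.mem_filter.2 ⟨Finset.mem_univ _, ?_⟩
    show f (L.actPt (L.actPt x)) ≠ 0
    rw [actPt_invol hL]
    exact (Finset.mem_filter.1 hx).2
  · intro x _
    exact actPt_invol hL x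
  · intro x _
    exact actPt_invol hL x

lemma wdist_img {L : LTA n} (hL : InSubG g L) {s1 s2 : Set (BF n)}
    (h : (fun v => L.act v) '' s1 = s2) : wdist s1 = wdist s2 := by
  funext dd
  apply Nat.card_congr
  refine ⟨fun x => ⟨L.act x.1, ?_, ?_⟩, fun y => ⟨L.act y.1, ?_, ?_⟩, ?_, ?_⟩
  · rw [← h]
    exact ⟨x.1, x.2.1, rfl⟩
  · rw [wt_act hL]
    exact x.2.2
  · have hy : (y.1 : BF n) ∈ (fun v => L.act v) '' s1 := by
      rw [h]
      exact y.2.1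
    obtain ⟨x, hx1, hx2⟩ := hy
    show L.act y.1 ∈ s1
    rw [show (y.1 : BF n) = L.act x from hx2.symm, act_invol hL]
    exact hx1
  · rw [wt_act hL]
    exact y.2.2
  · intro x
    exact Subtype.ext (act_invol hL x.1)
  · intro y
    exact Subtype.ext (act_invol hL y.1)

end Final

/-- for a decreasing monomial code `C(I)` with first information bit `g`,
`A = {f ∈ I : f ≺_o g, [f] < τ}` and `B = I ∖ ({g} ∪ A)`, the action of `LTA(n,2)_g` on the
set `S = {ev(g) + ∑_{h∈A} a_h·ev(h) + C(B)}` of cosets of `C(B)` is transitive; in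
particular all cosets in `S` have the same weight distribution. -/
theorem stmt1 {n : ℕ} (hn : 1 ≤ n) (I : Set (Mon n)) (hdec : DecMonCode I)
    (τ : ℕ) (hτlt : τ < 2 ^ n) (hτfrozen : τ ∉ rowIdx '' I)
    (hτmax : ∀ m < 2 ^ n, m ∉ rowIdx '' I → m ≤ τ)
    (g : Mon n) (hg : g ∈ I) (hgmin : ∀ f ∈ I, rowIdx g ≤ rowIdx f)
    (A : Set (Mon n)) (hA : A = {f | f ∈ I ∧ Ovd f g ∧ rowIdx f < τ})
    (B : Set (Mon n)) (hB : B = I \ ({g} ∪ A))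
    (S : Set (Set (BF n)))
    (hS : S = {s | ∃ a : Mon n → ZMod 2,
      s = (fun c => evm g + (∑ᶠ h ∈ A, a h • evm h) + c) '' code B}) :
    (∀ s1 ∈ S, ∀ s2 ∈ S, ∃ L : LTA n, InSubG g L ∧ (fun v => L.act v) '' s1 = s2) ∧
    (∀ s1 ∈ S, ∀ s2 ∈ S, wdist s1 = wdist s2) := by
  classical
  have hAfin : A.Finite := Set.toFinite A
  have hAsub : ∀ f ∈ A, f ∈ I ∧ Ovd f g := by
    intro f hf
    rw [hA] at hf
    exact ⟨hf.1, hf.2.1⟩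
  have main : ∀ s1 ∈ S, ∀ s2 ∈ S, ∃ L : LTA n, InSubG g L ∧ (fun v => L.act v) '' s1 = s2 := by
    intro s1 hs1 s2 hs2
    rw [hS] at hs1 hs2
    obtain ⟨a1, rfl⟩ := hs1
    obtain ⟨a2, rfl⟩ := hs2
    set y1 : BF n := evm g + (∑ᶠ h ∈ A, a1 h • evm h) with hy1
    set y2 : BF n := evm g + (∑ᶠ h ∈ A, a2 h • evm h) with hy2
    set Af : Finset (Mon n) := hAfin.toFinset with hAfdef
    have hTs : ∀ a : Mon n → ZMod 2,
        (∑ᶠ h ∈ A, a h • evm h) = ∑ h ∈ Af, a h • evm h := by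
      intro a
      rw [← Set.Finite.coe_toFinset hAfin, finsum_mem_coe_finset]
    set D : Finset (Mon n) := Af.filter (fun h => a1 h + a2 h = 1) with hDdef
    have hDsub : ↑D ⊆ A := by
      intro x hx
      exact (Set.Finite.mem_toFinset hAfin).1 (Finset.mem_of_mem_filter x (Finset.mem_coe.1 hx))
    obtain ⟨L, hL, hstep, hgeq⟩ := master hdec hgmin hAsub hB D hDsub
    refine ⟨L, hL, ?_⟩
    have hAfIg : ∀ h ∈ Af, h ∈ I ∧ h ≠ g := by
      intro h hh
      obtain ⟨h1, h2⟩ := hAsub h ((Set.Finite.mem_toFinset hAfin).1 hh)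
      exact ⟨h1, h2.ne⟩
    have hKmap : ∀ c ∈ Submodule.span (ZMod 2) (evm '' B),
        L.act c ∈ Submodule.span (ZMod 2) (evm '' B) := by
      apply act_span_le
      intro h hh
      have hhIg : h ∈ I ∧ h ≠ g := by
        rw [hB] at hh
        exact ⟨hh.1, fun he => hh.2 (Or.inl he)⟩
      rw [eq_add_of_char2 (L.act (evm h)) (evm h)]
      exact Submodule.add_mem _ (Submodule.subset_span ⟨h, hh, rfl⟩) (hstep h hhIg.1 hhIg.2)
    have hZ : (∑ h ∈ D, evm h) + ∑ h ∈ Af, a1 h • evm h = ∑ h ∈ Af, a2 h • evm h := by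
      rw [hDdef, Finset.sum_filter, ← Finset.sum_add_distrib]
      exact Finset.sum_congr rfl fun h _ => hcoef (a1 h) (a2 h) (evm h)
    have e1 : L.act y1 = L.act (evm g) + ∑ h ∈ Af, a1 h • L.act (evm h) := by
      rw [hy1, hTs, act_add]
      congr 1
      rw [show L.act (∑ h ∈ Af, a1 h • evm h) = ∑ h ∈ Af, L.act (a1 h • evm h) from
        map_sum (actLin L) _ _]
      exact Finset.sum_congr rfl fun h _ => act_smul L _ _
    have hG1 : L.act y1 + y2 ∈ Submodule.span (ZMod 2) (evm '' B) := by
      rw [e1, hy2, hTs a2, ← hZ]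
      have hm2 : (∑ h ∈ Af, a1 h • L.act (evm h)) + (∑ h ∈ Af, a1 h • evm h) ∈
          Submodule.span (ZMod 2) (evm '' B) := by
        rw [← Finset.sum_add_distrib]
        refine Submodule.sum_mem _ fun h hh => ?_
        rw [← smul_add]
        exact Submodule.smul_mem _ _ (hstep h (hAfIg h hh).1 (hAfIg h hh).2)
      have hY := Submodule.add_mem _ hgeq hm2
      convert hY using 1
      abel
    ext v
    constructor
    · rintro ⟨u, ⟨c, hc, rfl⟩, rfl⟩
      have hcK : c ∈ Submodule.span (ZMod 2) (evm '' B) := hc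
      refine ⟨(L.act y1 + y2) + L.act c,
        Submodule.add_mem _ hG1 (hKmap c hcK), ?_⟩
      show y2 + ((L.act y1 + y2) + L.act c) = L.act (y1 + c)
      rw [act_add L y1 c]
      abel_nf
      simp [bf_two_nsmul, bf_two_zsmul, bf_two_mul]
    · rintro ⟨c, hc, rfl⟩
      have hcK : c ∈ Submodule.span (ZMod 2) (evm '' B) := hc
      refine ⟨y1 + L.act ((L.act y1 + y2) + c),
        ⟨L.act ((L.act y1 + y2) + c), hKmap _ (Submodule.add_mem _ hG1 hcK), rfl⟩, ?_⟩
      show L.act (y1 + L.act ((L.act y1 + y2) + c)) = y2 + c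
      rw [act_add L y1 (L.act ((L.act y1 + y2) + c)), act_invol hL]
      abel_nf
      simp [bf_two_nsmul, bf_two_zsmul, bf_two_mul]
  refine ⟨main, fun s1 h1 s2 h2 => ?_⟩
  obtain ⟨L, hL, himg⟩ := main s1 h1 s2 h2
  exact wdist_img hL himg
end

section
/- For every (A,b) ∈ LTA(n,2)_{h2}^{h1} and every f ∈ O_{h1}∖O_{h2}∖D, the coefficient ⟨(A,b)·h1⟩_f equals the corresponding free parameter of the group element: it equals b_r if h1 = f·x_r, and it equals a_{s,t} if h1 = q·x_s and f = q·x_t with t < s. -/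
open Finset

variable {n : ℕ}

/-- Membership in the subgroup `LTA(n,2)_{h2}^{h1}`: all strictly-lower-triangular entries of
`A` and all entries of `b` vanish except possibly the free parameters: for
`f ∈ O_{h1}∖O_{h2}∖D`, the entry `a_{s,t}` when `h1 = q·x_s`, `f = q·x_t`, `t < s`, and the
entry `b_r` when `h1 = f·x_r`; for `f ∈ O_{h2}∖O_{h1}∖D`, the entry `a_{s,t}` when
`h2 = q·x_s`, `f = q·x_t`, `t < s`, and the entry `b_r` when `h2 = f·x_r`. -/
def InSub (h1 h2 : Mon n) (O1 O2 D : Set (Mon n)) (L : LTA n) : Prop :=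
  (∀ s t : Fin n, t < s → L.A s t ≠ 0 →
    (∃ f ∈ ((O1 \ O2) \ D), ∃ q : Mon n, s ∉ q ∧ t ∉ q ∧ h1 = insert s q ∧ f = insert t q) ∨
    (∃ f ∈ ((O2 \ O1) \ D), ∃ q : Mon n, s ∉ q ∧ t ∉ q ∧ h2 = insert s q ∧ f = insert t q)) ∧
  (∀ r : Fin n, L.b r ≠ 0 →
    (∃ f ∈ ((O1 \ O2) \ D), r ∉ f ∧ h1 = insert r f) ∨
    (∃ f ∈ ((O2 \ O1) \ D), r ∉ f ∧ h2 = insert r f))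

/-- The standing context: a decreasing monomial code `C(I)` with `n ≥ 1`, last frozen index
`τ = max F` where `F = {0,…,N−1} ∖ {[g] : g ∈ I}`; `h1` the monomial of `I` of smallest row
index; `h2` the monomial of `I` of smallest row index among those with `[h1] < [h2]` that are
not one-variable descendants of `h1`; and the feasibility assumption
`|ind(h1)∖ind(h2)| ≤ 2`, `|ind(h2)∖ind(h1)| ≤ 2`. -/
structure Setup (n : ℕ) where
  npos : 1 ≤ n
  I : Set (Mon n)
  dec : DecMonCode I
  τ : ℕ
  τlt : τ < 2 ^ n
  τfrozen : τ ∉ rowIdx '' I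
  τmax : ∀ m < 2 ^ n, m ∉ rowIdx '' I → m ≤ τ
  h1 : Mon n
  h1mem : h1 ∈ I
  h1min : ∀ g ∈ I, rowIdx h1 ≤ rowIdx g
  h2 : Mon n
  h2mem : h2 ∈ I
  h12 : rowIdx h1 < rowIdx h2
  h2novd : ¬ Ovd h2 h1
  h2min : ∀ g ∈ I, rowIdx h1 < rowIdx g → ¬ Ovd g h1 → rowIdx h2 ≤ rowIdx g
  feas1 : (h1 \ h2).card ≤ 2
  feas2 : (h2 \ h1).card ≤ 2

namespace Setup

variable (C : Setup n)

/-- `O_{h1} = {f ∈ I : f ≺_o h1, [h2] < [f] < τ}`. -/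
def O1 : Set (Mon n) := {f | f ∈ C.I ∧ Ovd f C.h1 ∧ rowIdx C.h2 < rowIdx f ∧ rowIdx f < C.τ}

/-- `O_{h2} = {f ∈ I : f ≺_o h2, [f] < τ}`. -/
def O2 : Set (Mon n) := {f | f ∈ C.I ∧ Ovd f C.h2 ∧ rowIdx f < C.τ}

/-- `O^c_{h1} = {f ∈ I : f ∉ O_{h1}, [h2] < [f] < τ}`. -/
def O1c : Set (Mon n) := {f | f ∈ C.I ∧ f ∉ C.O1 ∧ rowIdx C.h2 < rowIdx f ∧ rowIdx f < C.τ}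

/-- `O^c_{h2} = {f ∈ I : f ∉ O_{h2}, [h2] < [f] < τ}`. -/
def O2c : Set (Mon n) := {f | f ∈ C.I ∧ f ∉ C.O2 ∧ rowIdx C.h2 < rowIdx f ∧ rowIdx f < C.τ}

/-- `D = {f ∈ O_{h1} ∪ O_{h2} : ∏_{j ∈ ind(h1)∩ind(h2)} x_j ∤ f}`. -/
def D : Set (Mon n) := {f | f ∈ C.O1 ∪ C.O2 ∧ ¬ (C.h1 ∩ C.h2 ⊆ f)}

/-- `T = {f ∈ I : [f] > τ}`. -/
def T : Set (Mon n) := {f | f ∈ C.I ∧ C.τ < rowIdx f}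

/-- `B = ((O_{h2}∖O_{h1}) ∩ D) ∪ (O^c_{h1} ∩ O^c_{h2}) ∪ T`. -/
def B : Set (Mon n) := ((C.O2 \ C.O1) ∩ C.D) ∪ (C.O1c ∩ C.O2c) ∪ C.T

/-- `(A,b) ∈ LTA(n,2)_{h2}^{h1}`. -/
def Mem (L : LTA n) : Prop := InSub C.h1 C.h2 C.O1 C.O2 C.D L

/-- `W = {g ∈ O^c_{h1} ∩ O^c_{h2} : ∃ (A,b) ∈ LTA(n,2)_{h2}^{h1}, ∃ p ∈ O_{h1}∖O_{h2}∖D,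
⟨(A,b)·g⟩_p ≠ 0}`. -/
def W : Set (Mon n) :=
  {g | g ∈ C.O1c ∩ C.O2c ∧
    ∃ L : LTA n, C.Mem L ∧ ∃ p ∈ ((C.O1 \ C.O2) \ C.D), mcoeff (L.act (evm g)) p ≠ 0}

/-- `L` and `L'` have equal values on all entries associated with `O_{h2}∖O_{h1}∖D`
in the definition of the subgroup `LTA(n,2)_{h2}^{h1}`. -/
def agreeO2 (L L' : LTA n) : Prop :=
  (∀ f ∈ ((C.O2 \ C.O1) \ C.D), ∀ (q : Mon n) (s t : Fin n),
      s ∉ q → t ∉ q → t < s → C.h2 = insert s q → f = insert t q → L.A s t = L'.A s t) ∧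
  (∀ f ∈ ((C.O2 \ C.O1) \ C.D), ∀ r : Fin n, r ∉ f → C.h2 = insert r f → L.b r = L'.b r)

end Setup


/-! Auxiliary lemmas -/

lemma key_sum {n : ℕ} (f : Finset (Fin n)) :
    ∀ S ⊆ f, ∀ ℓ : Fin n → Pt n → ZMod 2,
    (∀ i ∈ S, ∀ x y : Pt n, (∀ j, j < i → x j = y j) →
      ℓ i x + x i = ℓ i y + y i) →
    ∑ x ∈ Finset.univ.filter (fun x : Pt n => ∀ i ∉ f, x i = 0),
      ∏ i ∈ S, ℓ i x = if S = f then 1 else 0 := by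
  induction f using Finset.strongInduction with
  | _ f IH =>
    intro S hSf ℓ hℓ
    rcases f.eq_empty_or_nonempty with rfl | hne
    · have hS : S = (∅ : Finset (Fin n)) := subset_empty.mp hSf
      subst hS
      have hfilt : Finset.univ.filter (fun x : Pt n => ∀ i ∉ (∅ : Finset (Fin n)), x i = 0)
          = {fun _ => 0} := by
        ext x
        simp only [mem_filter, mem_univ, true_and, mem_singleton]
        constructor
        · intro h; funext i; exact h i (Finset.notMem_empty i)
        · intro h i _; rw [h]
      rw [hfilt]
      simp
    · set M := f.max' hne with hM
      have hMf : M ∈ f := f.max'_mem hne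
      have hlt : ∀ i ∈ f, i ≠ M → i < M := fun i hi hi' => lt_of_le_of_ne (f.le_max' i hi) hi'
      have hupd : ∀ (y : Pt n) (c : ZMod 2), ∀ i ∈ S, i ≠ M →
          ℓ i (Function.update y M c) = ℓ i y := by
        intro y c i hi hiM
        have h := hℓ i hi (Function.update y M c) y (fun j hj => by
          refine Function.update_of_ne ?_ _ _
          exact (hj.trans (hlt i (hSf hi) hiM)).ne)
        rw [Function.update_of_ne hiM] at h
        exact add_right_cancel h
      -- reindex
      have hre : ∑ x ∈ Finset.univ.filter (fun x : Pt n => ∀ i ∉ f, x i = 0),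
            ∏ i ∈ S, ℓ i x
          = ∑ p ∈ (Finset.univ.filter
              (fun x : Pt n => ∀ i ∉ f.erase M, x i = 0)) ×ˢ (Finset.univ : Finset (ZMod 2)),
            ∏ i ∈ S, ℓ i (Function.update p.1 M p.2) := by
        refine Finset.sum_nbij' (fun x => (Function.update x M 0, x M))
          (fun p => Function.update p.1 M p.2) ?_ ?_ ?_ ?_ ?_
        · intro x hx
          simp only [mem_filter, mem_univ, true_and] at hx ⊢
          refine mem_product.mpr ⟨?_, mem_univ _⟩
          simp only [mem_filter, mem_univ, true_and]
          intro i hi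
          rcases eq_or_ne i M with rfl | hiM
          · exact Function.update_self _ _ _
          · rw [Function.update_of_ne hiM]
            exact hx i (fun h => hi (mem_erase.mpr ⟨hiM, h⟩))
        · intro p hp
          have hp1 := (mem_product.mp hp).1
          simp only [mem_filter, mem_univ, true_and] at hp1 ⊢
          intro i hi
          have hiM : i ≠ M := fun h => hi (h ▸ hMf)
          rw [Function.update_of_ne hiM]
          exact hp1 i (fun h => hi (mem_of_mem_erase h))
        · intro x hx
          simp only [Function.update_idem, Function.update_eq_self]
        · intro p hp
          have hp1 := (mem_product.mp hp).1
          simp only [mem_filter, mem_univ, true_and] at hp1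
          have : p.1 M = 0 := hp1 M (notMem_erase M f)
          have h1 : Function.update (Function.update p.1 M p.2) M 0 = p.1 := by
            rw [Function.update_idem]
            conv_lhs => rw [← this]
            exact Function.update_eq_self _ _
          have h2 : Function.update p.1 M p.2 M = p.2 := Function.update_self _ _ _
          exact Prod.ext h1 h2
        · intro x hx
          refine Finset.prod_congr rfl (fun i hi => ?_)
          rw [Function.update_idem, Function.update_eq_self]
      rw [hre, Finset.sum_product]
      by_cases hMS : M ∈ S
      · have hinner : ∀ y ∈ Finset.univ.filter (fun x : Pt n => ∀ i ∉ f.erase M, x i = 0),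
            ∑ c : ZMod 2, ∏ i ∈ S, ℓ i (Function.update y M c)
            = ∏ i ∈ S.erase M, ℓ i y := by
          intro y hy
          have hy0 : y M = 0 := by
            simp only [mem_filter, mem_univ, true_and] at hy
            exact hy M (notMem_erase M f)
          have hfac : ∀ c : ZMod 2, ∏ i ∈ S, ℓ i (Function.update y M c)
              = ℓ M (Function.update y M c) * ∏ i ∈ S.erase M, ℓ i y := by
            intro c
            rw [← Finset.mul_prod_erase S _ hMS]
            congr 1
            exact Finset.prod_congr rfl (fun i hi =>
              hupd y c i (mem_of_mem_erase hi) (ne_of_mem_erase hi))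
          have e2 : ∑ c : ZMod 2, ∏ i ∈ S, ℓ i (Function.update y M c)
              = (∏ i ∈ S, ℓ i (Function.update y M 0))
                + ∏ i ∈ S, ℓ i (Function.update y M 1) := Fin.sum_univ_two _
          rw [e2, hfac 0, hfac 1, ← add_mul]
          have h01 : ℓ M (Function.update y M 1) + 1 = ℓ M (Function.update y M 0) := by
            have h := hℓ M hMS (Function.update y M 1) (Function.update y M 0)
              (fun j hj => by rw [Function.update_of_ne hj.ne, Function.update_of_ne hj.ne])
            rwa [Function.update_self, Function.update_self, add_zero] at h
          have : ℓ M (Function.update y M 0) + ℓ M (Function.update y M 1) = 1 := by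
            rw [← h01, add_comm, ← add_assoc, CharTwo.add_self_eq_zero, zero_add]
          rw [this, one_mul]
        rw [Finset.sum_congr rfl hinner]
        have hIH := IH (f.erase M) (Finset.erase_ssubset hMf) (S.erase M)
          (Finset.erase_subset_erase M hSf) ℓ
          (fun i hi => hℓ i (mem_of_mem_erase hi))
        rw [hIH]
        congr 1
        rw [eq_iff_iff]
        constructor
        · intro h
          rw [← Finset.insert_erase hMS, ← Finset.insert_erase hMf, h]
        · intro h; rw [h]
      · have hinner : ∀ y : Pt n,
            ∑ c : ZMod 2, ∏ i ∈ S, ℓ i (Function.update y M c) = 0 := by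
          intro y
          have hfac : ∀ c : ZMod 2, ∏ i ∈ S, ℓ i (Function.update y M c)
              = ∏ i ∈ S, ℓ i y := fun c => Finset.prod_congr rfl (fun i hi =>
                hupd y c i hi (fun h => hMS (h ▸ hi)))
          have e2 : ∑ c : ZMod 2, ∏ i ∈ S, ℓ i (Function.update y M c)
              = (∏ i ∈ S, ℓ i (Function.update y M 0))
                + ∏ i ∈ S, ℓ i (Function.update y M 1) := Fin.sum_univ_two _
          rw [e2, hfac 0, hfac 1, CharTwo.add_self_eq_zero]
        simp only [hinner, Finset.sum_const_zero]
        have : S ≠ f := fun h => hMS (h ▸ hMf)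
        rw [if_neg this]


lemma LTA.actPt_apply {n : ℕ} (L : LTA n) (x : Pt n) (i : Fin n) :
    L.actPt x i = x i + (L.b i + ∑ j ∈ Finset.univ.filter (fun j => j < i), L.A i j * x j) := by
  have hmv : L.A.mulVec x i = ∑ j, L.A i j * x j := by
    simp [Matrix.mulVec, dotProduct]
  have hsplit : ∑ j, L.A i j * x j
      = ∑ j ∈ Finset.univ.filter (fun j => j < i), L.A i j * x j
        + ∑ j ∈ Finset.univ.filter (fun j => ¬ j < i), L.A i j * x j :=
    (Finset.sum_filter_add_sum_filter_not _ _ _).symm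
  have h2 : ∑ j ∈ Finset.univ.filter (fun j => ¬ j < i), L.A i j * x j = x i := by
    rw [Finset.sum_eq_single i]
    · rw [L.diag i, one_mul]
    · intro j hj hji
      simp only [mem_filter, mem_univ, true_and] at hj
      rw [L.lower i j (lt_of_le_of_ne (not_lt.mp hj) (Ne.symm hji)), zero_mul]
    · intro h
      exact absurd (by simp) h
  show L.A.mulVec x i + L.b i = _
  rw [hmv, hsplit, h2]
  ring

lemma LTA.actPt_cond {n : ℕ} (L : LTA n) (i : Fin n) (x y : Pt n)
    (h : ∀ j, j < i → x j = y j) :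
    L.actPt x i + x i = L.actPt y i + y i := by
  have hcc : ∀ a c : ZMod 2, a + c + a = c := fun a c => by
    rw [add_comm a c, add_assoc, CharTwo.add_self_eq_zero, add_zero]
  rw [LTA.actPt_apply, LTA.actPt_apply]
  have hs : ∑ j ∈ Finset.univ.filter (fun j => j < i), L.A i j * x j
      = ∑ j ∈ Finset.univ.filter (fun j => j < i), L.A i j * y j :=
    Finset.sum_congr rfl (fun j hj => by
      rw [h j (by simpa using hj)])
  rw [hs, hcc, hcc]

/-- for `(A,b) ∈ LTA(n,2)_{h2}^{h1}` and `f ∈ O_{h1}∖O_{h2}∖D`, the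
coefficient `⟨(A,b)·h1⟩_f` equals the corresponding free parameter: `b_r` if `h1 = f·x_r`,
and `a_{s,t}` if `h1 = q·x_s`, `f = q·x_t` with `t < s`. -/
theorem stmt4 {n : ℕ} (C : Setup n) (L : LTA n) (hL : C.Mem L)
    (f : Mon n) (hf : f ∈ ((C.O1 \ C.O2) \ C.D)) :
    (∀ r : Fin n, r ∉ f → C.h1 = insert r f → mcoeff (L.act (evm C.h1)) f = L.b r) ∧
    (∀ (q : Mon n) (s t : Fin n), s ∉ q → t ∉ q → t < s →
      C.h1 = insert s q → f = insert t q → mcoeff (L.act (evm C.h1)) f = L.A s t) := by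
  obtain ⟨⟨hfO1, hfO2⟩, hfD⟩ := hf
  have hsub : C.h1 ∩ C.h2 ⊆ f := by
    by_contra hns
    exact hfD ⟨Or.inl hfO1, hns⟩
  have hmc : mcoeff (L.act (evm C.h1)) f
      = ∑ x ∈ Finset.univ.filter (fun x : Pt n => ∀ i ∉ f, x i = 0),
          ∏ i ∈ C.h1, L.actPt x i := rfl
  constructor
  · -- translation part
    intro r hrf hh1
    have hA : ∀ j, j < r → j ∈ f → L.A r j = 0 := by
      intro j hjr hjf
      by_contra hne
      rcases hL.1 r j hjr hne with ⟨f', _, q', hsq', htq', hh1', _⟩ |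
        ⟨f', _, q', hsq', _, hh2', _⟩
      · have e : insert r f = insert r q' := hh1.symm.trans hh1'
        have : f = q' := by
          rw [← Finset.erase_insert hrf, e, Finset.erase_insert hsq']
        exact htq' (this ▸ hjf)
      · have hr2 : r ∈ C.h2 := hh2' ▸ Finset.mem_insert_self r q'
        have hr1 : r ∈ C.h1 := hh1 ▸ Finset.mem_insert_self r f
        exact hrf (hsub (Finset.mem_inter.mpr ⟨hr1, hr2⟩))
    have hkey : ∀ x ∈ Finset.univ.filter (fun x : Pt n => ∀ i ∉ f, x i = 0),
        ∏ i ∈ C.h1, L.actPt x i = L.b r * ∏ i ∈ f, L.actPt x i := by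
      intro x hx
      simp only [mem_filter, mem_univ, true_and] at hx
      have hxr : L.actPt x r = L.b r := by
        rw [LTA.actPt_apply]
        have h0 : x r = 0 := hx r hrf
        have hsum : ∑ j ∈ Finset.univ.filter (fun j => j < r), L.A r j * x j = 0 := by
          refine Finset.sum_eq_zero (fun j hj => ?_)
          simp only [mem_filter, mem_univ, true_and] at hj
          by_cases hjf : j ∈ f
          · rw [hA j hj hjf, zero_mul]
          · rw [hx j hjf, mul_zero]
        rw [h0, hsum, add_zero, zero_add]
      rw [hh1, Finset.prod_insert hrf, hxr]
    rw [hmc, Finset.sum_congr rfl hkey, ← Finset.mul_sum,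
      key_sum f f (subset_refl f) (fun i x => L.actPt x i)
        (fun i _ x y h => L.actPt_cond i x y h), if_pos rfl, mul_one]
  · -- linear part
    intro q s t hsq htq hts hh1 hfq
    have hsf : s ∉ f := by
      rw [hfq]
      simp only [Finset.mem_insert, not_or]
      exact ⟨hts.ne', hsq⟩
    have hA2 : ∀ j, j < s → j ∈ f → j ≠ t → L.A s j = 0 := by
      intro j hjs hjf hjt
      by_contra hne
      rcases hL.1 s j hjs hne with ⟨f', _, q', hsq', htq', hh1', _⟩ |
        ⟨f', _, q', hsq', _, hh2', _⟩
      · have e : insert s q = insert s q' := hh1.symm.trans hh1'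
        have hqq : q = q' := by
          rw [← Finset.erase_insert hsq, e, Finset.erase_insert hsq']
        have : j ∈ q := by
          rcases Finset.mem_insert.mp (hfq ▸ hjf) with h | h
          · exact absurd h hjt
          · exact h
        exact htq' (hqq ▸ this)
      · have hs2 : s ∈ C.h2 := hh2' ▸ Finset.mem_insert_self s q'
        have hs1 : s ∈ C.h1 := hh1 ▸ Finset.mem_insert_self s q
        exact hsf (hsub (Finset.mem_inter.mpr ⟨hs1, hs2⟩))
    have hkey : ∀ x ∈ Finset.univ.filter (fun x : Pt n => ∀ i ∉ f, x i = 0),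
        ∏ i ∈ C.h1, L.actPt x i
          = L.A s t * (x t * ∏ i ∈ q, L.actPt x i) + L.b s * ∏ i ∈ q, L.actPt x i := by
      intro x hx
      simp only [mem_filter, mem_univ, true_and] at hx
      have hxs : L.actPt x s = L.A s t * x t + L.b s := by
        rw [LTA.actPt_apply]
        have h0 : x s = 0 := hx s hsf
        have hsum : ∑ j ∈ Finset.univ.filter (fun j => j < s), L.A s j * x j
            = L.A s t * x t := by
          rw [Finset.sum_eq_single t]
          · intro j hj hjt
            simp only [mem_filter, mem_univ, true_and] at hj
            by_cases hjf : j ∈ f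
            · rw [hA2 j hj hjf hjt, zero_mul]
            · rw [hx j hjf, mul_zero]
          · intro h
            exact absurd (by simp [hts]) h
        rw [h0, hsum, zero_add, add_comm]
      rw [hh1, Finset.prod_insert hsq, hxs, add_mul, mul_assoc]
    rw [hmc, Finset.sum_congr rfl hkey, Finset.sum_add_distrib, ← Finset.mul_sum,
      ← Finset.mul_sum]
    have hqf : q ⊆ f := hfq ▸ Finset.subset_insert t q
    have hqne : q ≠ f := fun h => Finset.insert_ne_self.mpr htq (by rw [← hfq, h])
    have h2nd : ∑ x ∈ Finset.univ.filter (fun x : Pt n => ∀ i ∉ f, x i = 0),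
        ∏ i ∈ q, L.actPt x i = 0 := by
      rw [key_sum f q hqf (fun i x => L.actPt x i)
        (fun i _ x y h => L.actPt_cond i x y h), if_neg hqne]
    have h1st : ∑ x ∈ Finset.univ.filter (fun x : Pt n => ∀ i ∉ f, x i = 0),
        x t * ∏ i ∈ q, L.actPt x i = 1 := by
      have hpr : ∀ x : Pt n, x t * ∏ i ∈ q, L.actPt x i
          = ∏ i ∈ f, (fun i x => if i = t then x t else L.actPt x i) i x := by
        intro x
        rw [hfq, Finset.prod_insert htq]
        simp only [if_pos rfl]
        congr 1
        exact (Finset.prod_congr rfl (fun i hi => by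
          rw [if_neg (ne_of_mem_of_not_mem hi htq)]))
      rw [Finset.sum_congr rfl (fun x _ => hpr x),
        key_sum f f (subset_refl f) (fun i x => if i = t then x t else L.actPt x i)
          ?_, if_pos rfl]
      intro i _ x y h
      by_cases hit : i = t
      · subst hit
        simp [CharTwo.add_self_eq_zero]
      · simp only [if_neg hit]
        exact L.actPt_cond i x y h
    rw [h1st, h2nd, mul_one, mul_zero, add_zero]
end

section
/- For every (A,b) ∈ LTA(n,2)_{h2}^{h1} and every f ∈ O_{h2}∖O_{h1}∖D, the coefficient ⟨(A,b)·h2⟩_f equals the corresponding free parameter of the group element: it equals b_r if h2 = f·x_r, and it equals a_{s,t} if h2 = q·x_s and f = q·x_t with t < s. -/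
open Finset

variable {n : ℕ}

section Stmt6Aux

variable {n : ℕ}

def suppSet (S : Mon n) : Finset (Pt n) :=
  Finset.univ.filter (fun x : Pt n => ∀ i ∉ S, x i = 0)

lemma mem_suppSet {x : Pt n} {S : Mon n} : x ∈ suppSet S ↔ ∀ i ∉ S, x i = 0 := by
  simp [suppSet]

lemma sum_zmod2 (g : ZMod 2 → ZMod 2) : ∑ ε : ZMod 2, g ε = g 0 + g 1 := by
  have h : (univ : Finset (ZMod 2)) = {0, 1} := by decide
  rw [h, Finset.sum_pair (by decide)]

lemma sum_suppSet_insert (a : Fin n) (S : Mon n) (ha : a ∉ S) (F : Pt n → ZMod 2) :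
    ∑ x ∈ suppSet (insert a S), F x
      = ∑ x ∈ suppSet S, (F x + F (Function.update x a 1)) := by
  classical
  have h2 : ∀ x ∈ suppSet S, F x + F (Function.update x a 1)
      = ∑ ε : ZMod 2, F (Function.update x a ε) := by
    intro x hx
    have hxa : x a = 0 := mem_suppSet.mp hx a ha
    rw [sum_zmod2 (fun ε => F (Function.update x a ε))]
    have : Function.update x a 0 = x := by
      rw [← hxa]; exact Function.update_eq_self a x
    rw [this]
  rw [Finset.sum_congr rfl h2, ← Finset.sum_product']
  apply Finset.sum_nbij' (i := fun y : Pt n => ((Function.update y a 0 : Pt n), y a))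
    (j := fun p : Pt n × ZMod 2 => Function.update p.1 a p.2)
  · intro y hy
    simp only [Finset.mem_product, Finset.mem_univ, and_true]
    rw [mem_suppSet]
    intro i hi
    by_cases hia : i = a
    · rw [hia, Function.update_self]
    · rw [Function.update_of_ne hia]
      exact mem_suppSet.mp hy i (by simp [hi, hia])
  · intro p hp
    simp only [Finset.mem_product] at hp
    rw [mem_suppSet]
    intro i hi
    have hia : i ≠ a := fun h => hi (by rw [h]; exact mem_insert_self a S)
    rw [Function.update_of_ne hia]
    exact mem_suppSet.mp hp.1 i (fun h => hi (mem_insert_of_mem h))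
  · intro y hy
    simp only [Function.update_idem]
    rw [Function.update_eq_self]
  · intro p hp
    simp only [Finset.mem_product] at hp
    have hpa : p.1 a = 0 := mem_suppSet.mp hp.1 a ha
    ext1
    · simp only [Function.update_idem, Function.update_self]
      rw [← hpa]; exact Function.update_eq_self a p.1
    · simp
  · intro y hy
    simp only [Function.update_idem, Function.update_self]
    rw [Function.update_eq_self]

lemma key_sum_s6 (S : Mon n) (g : Fin n → ZMod 2 → ZMod 2) :
    ∑ x ∈ suppSet S, ∏ i ∈ S, g i (x i) = ∏ i ∈ S, (g i 0 + g i 1) := by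
  classical
  induction S using Finset.induction_on with
  | empty =>
      have : suppSet (∅ : Mon n) = {fun _ => 0} := by
        ext x; simp [suppSet, funext_iff]
      simp [this]
  | @insert a S ha ih =>
      rw [sum_suppSet_insert a S ha]
      have h1 : ∀ x ∈ suppSet S,
          (∏ i ∈ insert a S, g i (x i)) + (∏ i ∈ insert a S, g i (Function.update x a 1 i))
            = (g a 0 + g a 1) * ∏ i ∈ S, g i (x i) := by
        intro x hx
        have hxa : x a = 0 := mem_suppSet.mp hx a ha
        rw [Finset.prod_insert ha, Finset.prod_insert ha, hxa, Function.update_self]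
        have : ∀ i ∈ S, g i (Function.update x a 1 i) = g i (x i) := by
          intro i hi
          rw [Function.update_of_ne (fun h => ha (by rwa [h] at hi))]
        rw [Finset.prod_congr rfl this, add_mul]
      rw [Finset.sum_congr rfl h1, ← Finset.mul_sum, ih, Finset.prod_insert ha]

lemma sum_comp_invol (S : Mon n) (σ : Pt n → Pt n)
    (hmem : ∀ x ∈ suppSet S, σ x ∈ suppSet S)
    (hinv : ∀ x, σ (σ x) = x) (F : Pt n → ZMod 2) :
    ∑ x ∈ suppSet S, F (σ x) = ∑ x ∈ suppSet S, F x := by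
  apply Finset.sum_nbij' (i := σ) (j := σ) hmem hmem
    (fun x _ => hinv x) (fun x _ => hinv x) (fun x _ => rfl)

lemma zmod2_fact1 : ∀ b : ZMod 2, (0 + b) + (1 + b) = 1 := by decide
lemma zmod2_fact2 : ∀ a b : ZMod 2, (a * 0 + b) + (a * 1 + b) = a := by decide
lemma zmod2_fact3 : ∀ a b : ZMod 2, a + b + b = a := by decide

/-- Structural vanishing: entries of `A` with both indices in `h2` vanish. -/
lemma entryZero (C : Setup n) (L : LTA n) (hL : C.Mem L) {i j : Fin n} (hij : j < i)
    (hi : i ∈ C.h2) (hj : j ∈ C.h2) : L.A i j = 0 := by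
  by_contra hA
  rcases hL.1 i j hij hA with ⟨f1, hf1, q, hiq, _hjq, hh1, hf1e⟩ |
    ⟨f2, hf2, q, hiq, hjq, hh2, hf2e⟩
  · have hsub : C.h1 ∩ C.h2 ⊆ f1 := by
      by_contra hns
      exact hf1.2 ⟨Or.inl hf1.1.1, hns⟩
    have hi1 : i ∈ C.h1 := by rw [hh1]; exact mem_insert_self i q
    have : i ∈ f1 := hsub (Finset.mem_inter.mpr ⟨hi1, hi⟩)
    rw [hf1e, Finset.mem_insert] at this
    rcases this with h' | h'
    · exact hij.ne' h'
    · exact hiq h'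
  · have : j ∈ insert i q := by rw [← hh2]; exact hj
    rcases Finset.mem_insert.mp this with h' | h'
    · exact hij.ne h'
    · exact hjq h'

end Stmt6Aux

/-- for `(A,b) ∈ LTA(n,2)_{h2}^{h1}` and `f ∈ O_{h2}∖O_{h1}∖D`, the
coefficient `⟨(A,b)·h2⟩_f` equals the corresponding free parameter: `b_r` if `h2 = f·x_r`,
and `a_{s,t}` if `h2 = q·x_s`, `f = q·x_t` with `t < s`. -/
theorem stmt6 {n : ℕ} (C : Setup n) (L : LTA n) (hL : C.Mem L)
    (f : Mon n) (hf : f ∈ ((C.O2 \ C.O1) \ C.D)) :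
    (∀ r : Fin n, r ∉ f → C.h2 = insert r f → mcoeff (L.act (evm C.h2)) f = L.b r) ∧
    (∀ (q : Mon n) (s t : Fin n), s ∉ q → t ∉ q → t < s →
      C.h2 = insert s q → f = insert t q → mcoeff (L.act (evm C.h2)) f = L.A s t) := by
  have hGL : ∀ {i j : Fin n}, j < i → i ∈ C.h2 → j ∈ C.h2 → L.A i j = 0 :=
    fun hij hi hj => entryZero C L hL hij hi hj
  clear hf
  constructor
  · -- b case
    intro r hr hh2
    have hr2 : r ∈ C.h2 := by rw [hh2]; exact mem_insert_self r f
    have hmem2 : ∀ j ∈ f, j ∈ C.h2 := fun j hj => by rw [hh2]; exact mem_insert_of_mem hj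
    have hpt : ∀ x ∈ suppSet f,
        (∏ i ∈ C.h2, L.actPt x i) = L.b r * ∏ i ∈ f, (x i + L.b i) := by
      intro x hx
      have hx0 : ∀ i ∉ f, x i = 0 := mem_suppSet.mp hx
      have hmv : ∀ i : Fin n, L.actPt x i = (∑ j, L.A i j * x j) + L.b i := by
        intro i; simp [LTA.actPt, Matrix.mulVec, dotProduct]
      rw [hh2, Finset.prod_insert hr]
      congr 1
      · rw [hmv r]
        have h0 : (∑ j, L.A r j * x j) = 0 := by
          apply Finset.sum_eq_zero
          intro j _
          by_cases hjf : j ∈ f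
          · have hjr : j ≠ r := fun h => hr (h ▸ hjf)
            rcases hjr.lt_or_gt with h | h
            · rw [hGL h hr2 (hmem2 j hjf), zero_mul]
            · rw [L.lower r j h, zero_mul]
          · rw [hx0 j hjf, mul_zero]
        rw [h0, zero_add]
      · apply Finset.prod_congr rfl
        intro i hif
        rw [hmv i]
        congr 1
        rw [Finset.sum_eq_single i]
        · rw [L.diag, one_mul]
        · intro j _ hji
          by_cases hjf : j ∈ f
          · rcases hji.lt_or_gt with h | h
            · rw [hGL h (hmem2 i hif) (hmem2 j hjf), zero_mul]
            · rw [L.lower i j h, zero_mul]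
          · rw [hx0 j hjf, mul_zero]
        · intro h; exact absurd (Finset.mem_univ i) h
    calc mcoeff (L.act (evm C.h2)) f
        = ∑ x ∈ suppSet f, ∏ i ∈ C.h2, L.actPt x i := rfl
      _ = ∑ x ∈ suppSet f, L.b r * ∏ i ∈ f, (x i + L.b i) := Finset.sum_congr rfl hpt
      _ = L.b r * ∑ x ∈ suppSet f, ∏ i ∈ f, (x i + L.b i) := by rw [Finset.mul_sum]
      _ = L.b r * ∏ i ∈ f, ((0 + L.b i) + (1 + L.b i)) := by
            rw [key_sum_s6 f (fun i v => v + L.b i)]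
      _ = L.b r := by
            have h1 : ∀ i ∈ f, (0 + L.b i) + (1 + L.b i) = 1 := fun i _ => zmod2_fact1 _
            rw [Finset.prod_congr rfl h1, Finset.prod_const_one, mul_one]
  · -- A case
    intro q0 s t hs ht hts hh2 hfe
    have hth2 : t ∉ C.h2 := by
      rw [hh2, Finset.mem_insert]
      rintro (h | h)
      · exact hts.ne h
      · exact ht h
    have hq0h2 : ∀ j ∈ q0, j ∈ C.h2 := fun j hj => by rw [hh2]; exact mem_insert_of_mem hj
    have hsh2 : s ∈ C.h2 := by rw [hh2]; exact mem_insert_self s q0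
    set σ : Pt n → Pt n := fun x i => if i ∈ q0 then x i + L.A i t * x t else x i with hσ
    have hσt : ∀ x, σ x t = x t := fun x => if_neg ht
    have hσq : ∀ x, ∀ i ∈ q0, σ x i = x i + L.A i t * x t := fun x i hi => if_pos hi
    have hσn : ∀ (x : Pt n), ∀ i ∉ q0, σ x i = x i := fun x i hi => if_neg hi
    have hmemσ : ∀ x ∈ suppSet f, σ x ∈ suppSet f := by
      intro x hx
      rw [mem_suppSet]
      intro i hi
      have hiq : i ∉ q0 := fun h => hi (by rw [hfe]; exact mem_insert_of_mem h)
      rw [hσn x i hiq]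
      exact mem_suppSet.mp hx i hi
    have hinv : ∀ x, σ (σ x) = x := by
      intro x; funext i
      by_cases hiq : i ∈ q0
      · rw [hσq (σ x) i hiq, hσt, hσq x i hiq]
        exact zmod2_fact3 _ _
      · rw [hσn (σ x) i hiq, hσn x i hiq]
    set g : Fin n → ZMod 2 → ZMod 2 :=
      fun i v => if i = t then L.A s t * v + L.b s else v + L.b i with hg
    have hpt : ∀ x ∈ suppSet f,
        (∏ i ∈ C.h2, L.actPt (σ x) i) = ∏ i ∈ f, g i (x i) := by
      intro x hx
      have hσ0 : ∀ i ∉ f, σ x i = 0 := fun i hi => mem_suppSet.mp (hmemσ x hx) i hi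
      have hmv : ∀ i : Fin n, L.actPt (σ x) i = (∑ j, L.A i j * σ x j) + L.b i := by
        intro i; simp [LTA.actPt, Matrix.mulVec, dotProduct]
      rw [hh2, Finset.prod_insert hs, hfe, Finset.prod_insert ht]
      congr 1
      · rw [hmv s]
        have h0 : (∑ j, L.A s j * σ x j) = L.A s t * x t := by
          rw [Finset.sum_eq_single t]
          · rw [hσt]
          · intro j _ hjt
            by_cases hjf : j ∈ f
            · have hjq : j ∈ q0 := by
                rw [hfe, Finset.mem_insert] at hjf
                rcases hjf with h | h
                · exact absurd h hjt
                · exact h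
              have hjs : j ≠ s := fun h => hs (h ▸ hjq)
              rcases hjs.lt_or_gt with h | h
              · rw [hGL h hsh2 (hq0h2 j hjq), zero_mul]
              · rw [L.lower s j h, zero_mul]
            · rw [hσ0 j hjf, mul_zero]
          · intro h; exact absurd (Finset.mem_univ t) h
        rw [h0]
        show L.A s t * x t + L.b s = g t (x t)
        rw [hg]; simp
      · apply Finset.prod_congr rfl
        intro i hiq
        have hit : i ≠ t := fun h => ht (h ▸ hiq)
        rw [hmv i]
        have h0 : (∑ j, L.A i j * σ x j) = x i := by
          have hvan : ∀ j ∈ (univ : Finset (Fin n)),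
              j ∉ ({i, t} : Finset (Fin n)) → L.A i j * σ x j = 0 := by
            intro j _ hj
            simp only [Finset.mem_insert, Finset.mem_singleton, not_or] at hj
            by_cases hjf : j ∈ f
            · have hjq : j ∈ q0 := by
                rw [hfe, Finset.mem_insert] at hjf
                rcases hjf with h | h
                · exact absurd h hj.2
                · exact h
              rcases (show j ≠ i from hj.1).lt_or_gt with h | h
              · rw [hGL h (hq0h2 i hiq) (hq0h2 j hjq), zero_mul]
              · rw [L.lower i j h, zero_mul]
            · rw [hσ0 j hjf, mul_zero]
          rw [← Finset.sum_subset (Finset.subset_univ ({i, t} : Finset (Fin n))) hvan]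
          rw [Finset.sum_pair hit, hσq x i hiq, hσt, L.diag, one_mul]
          exact zmod2_fact3 _ _
        rw [h0]
        show x i + L.b i = g i (x i)
        rw [hg]; simp [hit]
    calc mcoeff (L.act (evm C.h2)) f
        = ∑ x ∈ suppSet f, ∏ i ∈ C.h2, L.actPt x i := rfl
      _ = ∑ x ∈ suppSet f, ∏ i ∈ C.h2, L.actPt (σ x) i :=
            (sum_comp_invol f σ hmemσ hinv (fun y => ∏ i ∈ C.h2, L.actPt y i)).symm
      _ = ∑ x ∈ suppSet f, ∏ i ∈ f, g i (x i) := Finset.sum_congr rfl hpt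
      _ = ∏ i ∈ f, (g i 0 + g i 1) := key_sum_s6 f g
      _ = L.A s t := by
            rw [hfe, Finset.prod_insert ht]
            have h1 : g t 0 + g t 1 = L.A s t := by
              rw [hg]; simp only [if_pos rfl]; exact zmod2_fact2 _ _
            have h2 : ∀ i ∈ q0, g i 0 + g i 1 = 1 := by
              intro i hi
              have hit : i ≠ t := fun h => ht (h ▸ hi)
              rw [hg]; simp only [if_neg hit]; exact zmod2_fact1 _
            rw [h1, Finset.prod_congr rfl h2, Finset.prod_const_one, mul_one]
end

section
/- For every (A,b) ∈ LTA(n,2)_{h2}^{h1}, the coefficient of (A,b)·h2 vanishes at every monomial in (O_{h1}∖O_{h2})∩D, in (O_{h2}∖O_{h1})∩D, and in O_{h1}∩O_{h2}; that is, ⟨(A,b)·h2⟩_f = 0 for all f ∈ ((O_{h1}∖O_{h2})∩D) ∪ ((O_{h2}∖O_{h1})∩D) ∪ (O_{h1}∩O_{h2}). -/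
open Finset

variable {n : ℕ}

section Aux

variable {n : ℕ}

private lemma zmod2_add_self (a : ZMod 2) : a + a = 0 := by revert a; decide

private lemma zmod2_add_one_ne (a : ZMod 2) : a + 1 ≠ a := by revert a; decide

/-- Monomials in `(O1∖O2)∖D` or `(O2∖O1)∖D` contain `h1 ∩ h2`. -/
private lemma Setup.sub_of_notD (C : Setup n) {f : Mon n}
    (hf : f ∈ C.O1 ∪ C.O2) (hD : f ∉ C.D) : C.h1 ∩ C.h2 ⊆ f := by
  by_contra h
  exact hD ⟨hf, h⟩

/-- Any nonzero strictly lower entry of `A` in a row `s ∈ h2` is an `h2`-type entry; in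
particular the column index is outside `h2` and the substituted monomial is in `(O2∖O1)∖D`. -/
private lemma Setup.Arow (C : Setup n) {L : LTA n} (hL : C.Mem L) {s t : Fin n}
    (hs : s ∈ C.h2) (hne : t ≠ s) (hA : L.A s t ≠ 0) :
    t ∉ C.h2 ∧ insert t (C.h2.erase s) ∈ (C.O2 \ C.O1) \ C.D := by
  rcases lt_or_gt_of_ne hne with hlt | hgt
  · rcases hL.1 s t hlt hA with ⟨f', hf', q, hsq, htq, he1, he2⟩ |
      ⟨f', hf', q, hsq, htq, he1, he2⟩
    · exfalso
      have hsub : C.h1 ∩ C.h2 ⊆ f' := C.sub_of_notD (Or.inl hf'.1.1) hf'.2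
      have hs1 : s ∈ C.h1 := he1 ▸ Finset.mem_insert_self s q
      have : s ∈ f' := hsub (Finset.mem_inter.2 ⟨hs1, hs⟩)
      rw [he2, Finset.mem_insert] at this
      rcases this with h | h
      · exact hne h.symm
      · exact hsq h
    · have hq : q = C.h2.erase s := by rw [he1, Finset.erase_insert hsq]
      constructor
      · rw [he1, Finset.mem_insert]
        rintro (h | h)
        · exact hne h
        · exact htq h
      · rw [← hq, ← he2]; exact hf'
  · exact absurd (L.lower s t hgt) hA

/-- Any nonzero entry of `b` at an index `r ∈ h2` is an `h2`-type entry. -/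
private lemma Setup.brow (C : Setup n) {L : LTA n} (hL : C.Mem L) {r : Fin n}
    (hr : r ∈ C.h2) (hb : L.b r ≠ 0) : C.h2.erase r ∈ (C.O2 \ C.O1) \ C.D := by
  rcases hL.2 r hb with ⟨f', hf', hrf, he⟩ | ⟨f', hf', hrf, he⟩
  · exfalso
    have hsub : C.h1 ∩ C.h2 ⊆ f' := C.sub_of_notD (Or.inl hf'.1.1) hf'.2
    have hr1 : r ∈ C.h1 := he ▸ Finset.mem_insert_self r f'
    exact hrf (hsub (Finset.mem_inter.2 ⟨hr1, hr⟩))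
  · rw [he, Finset.erase_insert hrf]
    exact hf'

/-- For `j ∈ h1 ∩ h2`, row `j` of `A` is trivial. -/
private lemma Setup.Arow_diag (C : Setup n) {L : LTA n} (hL : C.Mem L) {j : Fin n}
    (hj1 : j ∈ C.h1) (hj2 : j ∈ C.h2) {t : Fin n} (hne : t ≠ j) : L.A j t = 0 := by
  by_contra hA
  have h := (C.Arow hL hj2 hne hA).2
  have hsub : C.h1 ∩ C.h2 ⊆ insert t (C.h2.erase j) :=
    C.sub_of_notD (Or.inr h.1.1) h.2
  have : j ∈ insert t (C.h2.erase j) := hsub (Finset.mem_inter.2 ⟨hj1, hj2⟩)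
  rw [Finset.mem_insert] at this
  rcases this with h' | h'
  · exact hne h'.symm
  · exact (Finset.notMem_erase j C.h2) h'

/-- For `j ∈ h1 ∩ h2`, the entry `b_j` is trivial. -/
private lemma Setup.b_diag (C : Setup n) {L : LTA n} (hL : C.Mem L) {j : Fin n}
    (hj1 : j ∈ C.h1) (hj2 : j ∈ C.h2) : L.b j = 0 := by
  by_contra hb
  have h := C.brow hL hj2 hb
  have hsub : C.h1 ∩ C.h2 ⊆ C.h2.erase j := C.sub_of_notD (Or.inr h.1.1) h.2
  exact (Finset.notMem_erase j C.h2) (hsub (Finset.mem_inter.2 ⟨hj1, hj2⟩))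

/-- If `h1 ∩ h2 ⊄ f`, the coefficient of `(A,b)·h2` at `f` vanishes. -/
private lemma Setup.main0 (C : Setup n) {L : LTA n} (hL : C.Mem L) (f : Mon n)
    (hnd : ¬ (C.h1 ∩ C.h2 ⊆ f)) : mcoeff (L.act (evm C.h2)) f = 0 := by
  obtain ⟨j, hj, hjf⟩ := Finset.not_subset.1 hnd
  have hj1 : j ∈ C.h1 := (Finset.mem_inter.1 hj).1
  have hj2 : j ∈ C.h2 := (Finset.mem_inter.1 hj).2
  unfold mcoeff
  apply Finset.sum_eq_zero
  intro x hx
  have hx' : ∀ i ∉ f, x i = 0 := (Finset.mem_filter.1 hx).2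
  show evm C.h2 (L.actPt x) = 0
  unfold evm
  apply Finset.prod_eq_zero hj2
  show (L.A.mulVec x + L.b) j = 0
  rw [Pi.add_apply, C.b_diag hL hj1 hj2, add_zero]
  simp only [Matrix.mulVec, dotProduct]
  apply Finset.sum_eq_zero
  intro t _
  by_cases ht : t = j
  · rw [ht, hx' j hjf, mul_zero]
  · rw [C.Arow_diag hL hj1 hj2 ht, zero_mul]

end Aux

/-- for `(A,b) ∈ LTA(n,2)_{h2}^{h1}`, the coefficient of `(A,b)·h2` vanishes
at every monomial of `((O_{h1}∖O_{h2})∩D) ∪ ((O_{h2}∖O_{h1})∩D) ∪ (O_{h1}∩O_{h2})`. -/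
theorem stmt7 {n : ℕ} (C : Setup n) (L : LTA n) (hL : C.Mem L) :
    ∀ f ∈ (((C.O1 \ C.O2) ∩ C.D) ∪ ((C.O2 \ C.O1) ∩ C.D) ∪ (C.O1 ∩ C.O2)),
      mcoeff (L.act (evm C.h2)) f = 0 := by
  intro f hf
  rcases hf with (hf | hf) | hf
  · exact C.main0 hL f hf.2.2
  · exact C.main0 hL f hf.2.2
  · -- `f ∈ O1 ∩ O2`
    have hO1 : f ∈ C.O1 := hf.1
    have hOvd : Ovd f C.h2 := hf.2.2.1
    rcases hOvd with ⟨i0, hi0f, he⟩ | ⟨q, s0, t0, hsq, htq, hlt, he2, hef⟩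
    · -- deletion case: `h2 = insert i0 f`
      have hi0h2 : i0 ∈ C.h2 := he ▸ Finset.mem_insert_self _ _
      have herase : C.h2.erase i0 = f := by rw [he, Finset.erase_insert hi0f]
      have hfsub : f ⊆ C.h2 := by rw [he]; exact Finset.subset_insert _ _
      unfold mcoeff
      apply Finset.sum_eq_zero
      intro x hx
      have hx' : ∀ i ∉ f, x i = 0 := (Finset.mem_filter.1 hx).2
      show evm C.h2 (L.actPt x) = 0
      unfold evm
      apply Finset.prod_eq_zero hi0h2
      show (L.A.mulVec x + L.b) i0 = 0
      have hb : L.b i0 = 0 := by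
        by_contra hb
        have h := C.brow hL hi0h2 hb
        rw [herase] at h
        exact h.1.2 hO1
      rw [Pi.add_apply, hb, add_zero]
      simp only [Matrix.mulVec, dotProduct]
      apply Finset.sum_eq_zero
      intro t _
      by_cases ht : t = i0
      · rw [ht, hx' i0 hi0f, mul_zero]
      · by_cases hxt : x t = 0
        · rw [hxt, mul_zero]
        · have htf : t ∈ f := by by_contra h; exact hxt (hx' t h)
          have hA : L.A i0 t = 0 := by
            by_contra hA
            exact (C.Arow hL hi0h2 ht hA).1 (hfsub htf)
          rw [hA, zero_mul]
    · -- substitution case: `h2 = insert s0 q`, `f = insert t0 q`, `t0 < s0`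
      have hs0h2 : s0 ∈ C.h2 := he2 ▸ Finset.mem_insert_self _ _
      have hq : q = C.h2.erase s0 := by rw [he2, Finset.erase_insert hsq]
      have hts : t0 ≠ s0 := ne_of_lt hlt
      have ht0h2 : t0 ∉ C.h2 := by
        rw [he2, Finset.mem_insert]
        rintro (h | h)
        · exact hts h
        · exact htq h
      have ht0f : t0 ∈ f := hef ▸ Finset.mem_insert_self _ _
      have hqf : q ⊆ f := hef ▸ Finset.subset_insert _ _
      have hAst : L.A s0 t0 = 0 := by
        by_contra hA
        have h := (C.Arow hL hs0h2 hts hA).2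
        rw [← hq, ← hef] at h
        exact h.1.2 hO1
      have hAdiag : ∀ i ∈ C.h2, ∀ t ∈ C.h2, t ≠ i → L.A i t = 0 := by
        intro i hi t htmem hne
        by_contra hA
        exact (C.Arow hL hi hne hA).1 htmem
      -- the shift vector of the cancelling involution
      set v : Pt n := fun j => if j = t0 then 1 else
        if j ∈ C.h2.erase s0 then L.A j t0 else 0 with hv
      have hvt0 : v t0 = 1 := if_pos rfl
      have hvmem : ∀ t ∈ C.h2.erase s0, v t = L.A t t0 := by
        intro t ht
        have h1 : t ≠ t0 := fun h => ht0h2 (Finset.mem_of_mem_erase (h ▸ ht))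
        show (if t = t0 then (1 : ZMod 2) else
          if t ∈ C.h2.erase s0 then L.A t t0 else 0) = L.A t t0
        rw [if_neg h1, if_pos ht]
      have hvout : ∀ t, t ≠ t0 → t ∉ C.h2.erase s0 → v t = 0 := by
        intro t h1 h2
        show (if t = t0 then (1 : ZMod 2) else
          if t ∈ C.h2.erase s0 then L.A t t0 else 0) = 0
        rw [if_neg h1, if_neg h2]
      have hv0 : ∀ i ∉ f, v i = 0 := by
        intro i hi
        exact hvout i (fun h => hi (h ▸ ht0f)) (fun h => hi (hqf (hq ▸ h)))
      -- `A·v` vanishes on rows in `h2`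
      have hAv : ∀ i ∈ C.h2, (L.A.mulVec v) i = 0 := by
        intro i hi
        have step : ∀ t : Fin n, L.A i t * v t =
            (if t = t0 then L.A i t0 else 0) +
            (if t ∈ C.h2.erase s0 then L.A i t * L.A t t0 else 0) := by
          intro t
          by_cases h1 : t = t0
          · have h2 : t0 ∉ C.h2.erase s0 := fun h => ht0h2 (Finset.mem_of_mem_erase h)
            subst h1
            rw [hvt0, mul_one, if_pos rfl, if_neg h2, add_zero]
          · by_cases h2 : t ∈ C.h2.erase s0
            · rw [hvmem t h2, if_neg h1, if_pos h2, zero_add]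
            · rw [hvout t h1 h2, mul_zero, if_neg h1, if_neg h2, add_zero]
        have expand : (L.A.mulVec v) i =
            L.A i t0 + ∑ t ∈ C.h2.erase s0, L.A i t * L.A t t0 := by
          simp only [Matrix.mulVec, dotProduct]
          rw [Finset.sum_congr rfl (fun t _ => step t), Finset.sum_add_distrib,
            Finset.sum_ite_eq' Finset.univ t0 (fun _ => L.A i t0),
            Finset.sum_ite_mem, Finset.univ_inter]
          simp
        rw [expand]
        by_cases his : i = s0
        · subst his
          rw [hAst, Finset.sum_eq_zero, add_zero]
          intro t htmem
          rw [hAdiag i hi t (Finset.mem_of_mem_erase htmem)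
            (Finset.ne_of_mem_erase htmem), zero_mul]
        · rw [Finset.sum_eq_single_of_mem i (Finset.mem_erase.2 ⟨his, hi⟩)
            (fun t htmem hne => by
              rw [hAdiag i hi t (Finset.mem_of_mem_erase htmem) hne, zero_mul]),
            L.diag i, one_mul]
          exact zmod2_add_self _
      -- per-factor invariance under the shift
      have hact : ∀ x : Pt n, ∀ i ∈ C.h2,
          (L.A.mulVec (x + v) + L.b) i = (L.A.mulVec x + L.b) i := by
        intro x i hi
        rw [Matrix.mulVec_add, Pi.add_apply, Pi.add_apply, Pi.add_apply, hAv i hi, add_zero]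
      unfold mcoeff
      apply Finset.sum_involution (fun x _ => x + v)
      · intro x hx
        have heq : L.act (evm C.h2) (x + v) = L.act (evm C.h2) x := by
          show evm C.h2 (L.actPt (x + v)) = evm C.h2 (L.actPt x)
          unfold evm
          exact Finset.prod_congr rfl (fun i hi => hact x i hi)
        rw [heq]
        exact zmod2_add_self _
      · intro x hx _ hcon
        have := congrFun hcon t0
        rw [Pi.add_apply] at this
        have hvt : v t0 = 1 := by simp [hv]
        rw [hvt] at this
        exact zmod2_add_one_ne _ this
      · intro x hx
        simp only [Finset.mem_filter, Finset.mem_univ, true_and] at hx ⊢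
        intro i hi
        rw [Pi.add_apply, hx i hi, hv0 i hi, add_zero]
      · intro x hx
        funext j
        simp only [Pi.add_apply]
        rw [add_assoc, zmod2_add_self, add_zero]
end

section
/- For every f ∈ O_{h1}∖O_{h2}∖D, the coefficient ⟨(A,b)·h2⟩_f depends only on the free parameters of (A,b) associated with O_{h2}∖O_{h1}∖D: if (A,b), (A′,b′) ∈ LTA(n,2)_{h2}^{h1} have equal values on all entries associated with O_{h2}∖O_{h1}∖D in the definition of the subgroup, then ⟨(A,b)·h2⟩_f = ⟨(A′,b′)·h2⟩_f. -/
open Finset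

variable {n : ℕ}

/-- for `f ∈ O_{h1}∖O_{h2}∖D`, the coefficient `⟨(A,b)·h2⟩_f` depends only on
the free parameters of `(A,b)` associated with `O_{h2}∖O_{h1}∖D`. -/
theorem stmt8 {n : ℕ} (C : Setup n) (f : Mon n) (hf : f ∈ ((C.O1 \ C.O2) \ C.D))
    (L L' : LTA n) (hL : C.Mem L) (hL' : C.Mem L') (hagree : C.agreeO2 L L') :
    mcoeff (L.act (evm C.h2)) f = mcoeff (L'.act (evm C.h2)) f := by
  -- Case-1 (h1) parameters vanish on rows indexed by h2.
  have contraA : ∀ {f' : Mon n}, f' ∈ ((C.O1 \ C.O2) \ C.D) → ∀ {q : Mon n} {i j : Fin n},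
      i ∉ q → C.h1 = insert i q → f' = insert j q → j < i → i ∈ C.h2 → False := by
    intro f' hf' q i j hiq hh1 hfq hji hi2
    have hsub : C.h1 ∩ C.h2 ⊆ f' := by
      by_contra h
      exact hf'.2 ⟨Or.inl hf'.1.1, h⟩
    have hi1 : i ∈ C.h1 := by rw [hh1]; exact Finset.mem_insert_self i q
    have : i ∈ f' := hsub (Finset.mem_inter.mpr ⟨hi1, hi2⟩)
    rw [hfq, Finset.mem_insert] at this
    rcases this with h | h
    · exact absurd h (Fin.ne_of_gt hji)
    · exact hiq h
  have contrab : ∀ {f' : Mon n}, f' ∈ ((C.O1 \ C.O2) \ C.D) → ∀ {r : Fin n},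
      r ∉ f' → C.h1 = insert r f' → r ∈ C.h2 → False := by
    intro f' hf' r hrf hh1 hr2
    have hsub : C.h1 ∩ C.h2 ⊆ f' := by
      by_contra h
      exact hf'.2 ⟨Or.inl hf'.1.1, h⟩
    have hr1 : r ∈ C.h1 := by rw [hh1]; exact Finset.mem_insert_self r f'
    exact hrf (hsub (Finset.mem_inter.mpr ⟨hr1, hr2⟩))
  have keyA : ∀ i ∈ C.h2, ∀ j, L.A i j = L'.A i j := by
    intro i hi j
    rcases lt_trichotomy j i with hji | rfl | hij
    · by_cases hz : L.A i j = 0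
      · by_cases hz' : L'.A i j = 0
        · rw [hz, hz']
        · rcases hL'.1 i j hji hz' with ⟨f', hf', q, hsq, htq, hh1, hfq⟩ |
            ⟨f', hf', q, hsq, htq, hh2, hfq⟩
          · exact absurd (contraA hf' hsq hh1 hfq hji hi) (fun h => h)
          · exact hagree.1 f' hf' q i j hsq htq hji hh2 hfq
      · rcases hL.1 i j hji hz with ⟨f', hf', q, hsq, htq, hh1, hfq⟩ |
          ⟨f', hf', q, hsq, htq, hh2, hfq⟩
        · exact absurd (contraA hf' hsq hh1 hfq hji hi) (fun h => h)
        · exact hagree.1 f' hf' q i j hsq htq hji hh2 hfq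
    · rw [L.diag, L'.diag]
    · rw [L.lower i j hij, L'.lower i j hij]
  have keyb : ∀ i ∈ C.h2, L.b i = L'.b i := by
    intro i hi
    by_cases hz : L.b i = 0
    · by_cases hz' : L'.b i = 0
      · rw [hz, hz']
      · rcases hL'.2 i hz' with ⟨f', hf', hrf, hh1⟩ | ⟨f', hf', hrf, hh2⟩
        · exact absurd (contrab hf' hrf hh1 hi) (fun h => h)
        · exact hagree.2 f' hf' i hrf hh2
    · rcases hL.2 i hz with ⟨f', hf', hrf, hh1⟩ | ⟨f', hf', hrf, hh2⟩
      · exact absurd (contrab hf' hrf hh1 hi) (fun h => h)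
      · exact hagree.2 f' hf' i hrf hh2
  have hact : L.act (evm C.h2) = L'.act (evm C.h2) := by
    funext x
    show (∏ i ∈ C.h2, L.actPt x i) = ∏ i ∈ C.h2, L'.actPt x i
    apply Finset.prod_congr rfl
    intro i hi
    show L.A.mulVec x i + L.b i = L'.A.mulVec x i + L'.b i
    rw [keyb i hi]
    congr 1
    simp only [Matrix.mulVec]
    exact Finset.sum_congr rfl fun j _ => by simp only []; rw [keyA i hi j]
  rw [hact]
end
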